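/- arXiv:1902.07533 — 9 statements merged into one kernel-verified Lean document; each statement's English description precedes it below -/
import Mathlib

section
/- Let K be the finite field F_2[x]/⟨f(x)⟩ where f is a self-reciprocal irreducible polynomial over F_2 of even degree d dividing x^n - 1 for odd n. Then for every a(x) in K, a(x^{-1}) ≡ a(x)^{2^{d/2}} (mod f(x)). -/
open Polynomial

private lemma aeval_sq2 {K : Type*} [CommRing K] [Algebra (ZMod 2) K] [CharP K 2]
    (y : K) (g : Polynomial (ZMod 2)) : aeval (y ^ 2) g = (aeval y g) ^ 2 := by
  induction g using Polynomial.induction_on' with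
  | add p q hp hq => rw [map_add, map_add, hp, hq, add_pow_char]
  | monomial m c =>
      have hc : c ^ 2 = c := by revert c; decide
      rw [aeval_monomial, aeval_monomial, mul_pow, ← map_pow, hc, ← pow_mul, ← pow_mul,
        mul_comm m 2]

private lemma aeval_pow_pow2 {K : Type*} [CommRing K] [Algebra (ZMod 2) K] [CharP K 2]
    (y : K) (g : Polynomial (ZMod 2)) (i : ℕ) :
    aeval (y ^ 2 ^ i) g = (aeval y g) ^ 2 ^ i := by
  induction i with
  | zero => simp
  | succ i ih =>
      rw [pow_succ, pow_mul, aeval_sq2, ih, ← pow_mul, ← pow_succ]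

/-- Let `K = F_2[x]/⟨f⟩` where `f` is a self-reciprocal irreducible polynomial over `F_2`
of even degree `d` dividing `x^n - 1` for odd `n`.  Then for every polynomial `a`,
`a(x⁻¹) = a(x)^(2^(d/2))` in `K`, where `x⁻¹ = x^(n-1)`. -/
theorem stmt_2 (n : ℕ) (hn : Odd n) (hn0 : 0 < n) (f : Polynomial (ZMod 2))
    (hirr : Irreducible f) (hd : 2 ≤ f.natDegree) (hdeven : Even f.natDegree)
    (hself : f.reverse = f) (hdvd : f ∣ X ^ n - 1) (a : Polynomial (ZMod 2)) :
    Polynomial.aeval ((Ideal.Quotient.mk (Ideal.span {f}) X) ^ (n - 1)) a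
      = (Polynomial.aeval (Ideal.Quotient.mk (Ideal.span {f}) X) a) ^ (2 ^ (f.natDegree / 2)) := by
  haveI : Fact (Irreducible f) := ⟨hirr⟩
  set d := f.natDegree with hdd
  set K := AdjoinRoot f
  set r : K := AdjoinRoot.root f with hr
  show aeval (r ^ (n - 1)) a = (aeval r a) ^ (2 ^ (d / 2))
  have hf0 : f ≠ 0 := hirr.ne_zero
  haveI : CharP K 2 := charP_of_injective_algebraMap (algebraMap (ZMod 2) K).injective 2
  -- cardinality
  haveI : Fintype K := Module.fintypeOfFintype (AdjoinRoot.powerBasis hf0).basis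
  have hcard : Fintype.card K = 2 ^ d := by
    rw [Module.card_fintype (AdjoinRoot.powerBasis hf0).basis, ZMod.card, Fintype.card_fin]
    rfl
  -- r ^ n = 1
  have hrn : r ^ n = 1 := by
    have h0 : (AdjoinRoot.mk f) (X ^ n - 1) = 0 := AdjoinRoot.mk_eq_zero.mpr hdvd
    rw [map_sub, map_pow, map_one, AdjoinRoot.mk_X, sub_eq_zero] at h0
    exact h0
  have hr0 : r ≠ 0 := by
    intro h
    rw [h, zero_pow hn0.ne'] at hrn
    exact zero_ne_one hrn
  -- frobenius fixed points
  have hfrob : ∀ y : K, y ^ 2 ^ d = y := by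
    intro y
    have := FiniteField.pow_card y
    rwa [hcard] at this
  -- key: r ^ 2 ^ i = r implies i = 0, for i < d
  have hA : ∀ i : ℕ, i < d → r ^ 2 ^ i = r → i = 0 := by
    intro i hid heq
    by_contra hi0
    have hi1 : 1 ≤ i := Nat.one_le_iff_ne_zero.mpr hi0
    have hall : ∀ y : K, y ^ 2 ^ i = y := by
      intro y
      obtain ⟨g, rfl⟩ := AdjoinRoot.mk_surjective y
      rw [← AdjoinRoot.aeval_eq, ← aeval_pow_pow2, heq]
    set p : K[X] := X ^ 2 ^ i - X with hp
    have h2i : 1 < 2 ^ i := Nat.one_lt_two_pow_iff.mpr hi0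
    have hpd : p.natDegree = 2 ^ i := by
      rw [hp, natDegree_sub_eq_left_of_natDegree_lt, natDegree_X_pow]
      rw [natDegree_X_pow, natDegree_X]
      exact h2i
    have hpne : p ≠ 0 := by
      intro h
      rw [h, natDegree_zero] at hpd
      omega
    have hsub : Finset.univ ⊆ p.roots.toFinset := by
      intro y _
      rw [Multiset.mem_toFinset, mem_roots hpne]
      simp [hp, hall y]
    have hle : Fintype.card K ≤ 2 ^ i := by
      calc Fintype.card K = Finset.univ.card := (Finset.card_univ (α := K)).symm
        _ ≤ p.roots.toFinset.card := Finset.card_le_card hsub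
        _ ≤ Multiset.card p.roots := p.roots.toFinset_card_le
        _ ≤ p.natDegree := p.card_roots'
        _ = 2 ^ i := hpd
    rw [hcard] at hle
    exact absurd hle (not_le.mpr (Nat.pow_lt_pow_right one_lt_two hid))
  -- distinctness of conjugates
  have hinj : Set.InjOn (fun i => r ^ 2 ^ i) (Finset.range d) := by
    intro i hi k hk heq
    simp only [Finset.coe_range, Set.mem_Iio] at hi hk
    simp only at heq
    rcases Nat.lt_trichotomy i k with h | h | h
    · exfalso
      have : r ^ 2 ^ (i + (d - k)) = r := by
        rw [pow_add, pow_mul, heq, ← pow_mul, ← pow_add, Nat.add_sub_cancel' hk.le, hfrob]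
      have := hA _ (by omega) this
      omega
    · exact h
    · exfalso
      have : r ^ 2 ^ (k + (d - i)) = r := by
        rw [pow_add, pow_mul, ← heq, ← pow_mul, ← pow_add, Nat.add_sub_cancel' hi.le, hfrob]
      have := hA _ (by omega) this
      omega
  -- r⁻¹ is a root of f
  haveI : Invertible r := invertibleOfNonzero hr0
  have haevalr : aeval r f = 0 := by
    rw [AdjoinRoot.aeval_eq, AdjoinRoot.mk_self]
  have hinvroot : aeval r⁻¹ f = 0 := by
    have := (eval₂_reverse_eq_zero_iff (algebraMap (ZMod 2) K) r f).mpr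
      (by rwa [aeval_def] at haevalr)
    rw [hself, invOf_eq_inv] at this
    rwa [aeval_def]
  -- the set of conjugates is all roots
  set F : K[X] := f.map (algebraMap (ZMod 2) K) with hF
  have hFne : F ≠ 0 := (Polynomial.map_ne_zero_iff (algebraMap (ZMod 2) K).injective).mpr hf0
  have hFd : F.natDegree = d := natDegree_map_eq_of_injective (algebraMap (ZMod 2) K).injective f
  have hmemroots : ∀ y : K, aeval y f = 0 → y ∈ F.roots.toFinset := by
    intro y hy
    rw [Multiset.mem_toFinset, mem_roots hFne]
    rw [IsRoot, hF, eval_map, ← aeval_def, hy]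
  set T : Finset K := (Finset.range d).image (fun i => r ^ 2 ^ i) with hT
  have hTcard : T.card = d := by
    rw [hT, Finset.card_image_of_injOn hinj, Finset.card_range]
  have hTsub : T ⊆ F.roots.toFinset := by
    intro y hy
    rw [hT, Finset.mem_image] at hy
    obtain ⟨i, _, rfl⟩ := hy
    exact hmemroots _ (by rw [aeval_pow_pow2, haevalr, zero_pow (Nat.pos_of_ne_zero (by positivity)).ne'])
  have hTeq : T = F.roots.toFinset := by
    apply Finset.eq_of_subset_of_card_le hTsub
    calc F.roots.toFinset.card ≤ Multiset.card F.roots := F.roots.toFinset_card_le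
      _ ≤ F.natDegree := F.card_roots'
      _ = d := hFd
      _ = T.card := hTcard.symm
  have hinvT : r⁻¹ ∈ T := by
    rw [hTeq]; exact hmemroots _ hinvroot
  rw [hT, Finset.mem_image] at hinvT
  obtain ⟨j, hjd, hj⟩ := hinvT
  rw [Finset.mem_range] at hjd
  -- j = d / 2
  have h2j : r ^ 2 ^ (j + j) = r := by
    rw [pow_add, pow_mul, hj, inv_pow, hj, inv_inv]
  have hjd2 : j = d / 2 := by
    rcases Nat.lt_or_ge (j + j) d with h | h
    · -- then j + j = 0, so r⁻¹ = r, contradiction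
      have hj0 : j = 0 := by have := hA _ h h2j; omega
      rw [hj0, pow_zero, pow_one] at hj
      have hr2 : r * r = 1 := by nth_rewrite 1 [hj]; exact inv_mul_cancel₀ hr0
      have h2K : (2 : K) = 0 := by exact_mod_cast CharP.cast_eq_zero K 2
      have hr1 : r = 1 := by
        have hsq : (r - 1) ^ 2 = 0 := by linear_combination (-1 : K) + hr2 + (1 - r) * h2K
        have := pow_eq_zero_iff (n := 2) (by norm_num) |>.mp hsq
        linear_combination this
      have hdvd1 : f ∣ X - C (1 : ZMod 2) := by
        rw [← AdjoinRoot.mk_eq_zero, map_sub, AdjoinRoot.mk_X, ← hr, hr1]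
        simp
      have := Polynomial.natDegree_le_of_dvd hdvd1 (X_sub_C_ne_zero 1)
      rw [natDegree_X_sub_C] at this
      omega
    · have hm : r ^ 2 ^ (j + j - d) = r := by
        have : r ^ 2 ^ (d + (j + j - d)) = r := by
          rw [Nat.add_sub_cancel' h, h2j]
        rwa [pow_add, pow_mul, hfrob] at this
      have := hA _ (by omega) hm
      omega
  -- finish
  have hrinv : r ^ (n - 1) = r⁻¹ := by
    apply eq_inv_of_mul_eq_one_left
    rw [← pow_succ, Nat.sub_add_cancel hn0]
    exact hrn
  rw [hrinv, ← hj, hjd2, aeval_pow_pow2]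
  rfl
end

section
/- Let K be the finite field F_2[x]/⟨f(x)⟩ where f is a self-reciprocal irreducible polynomial over F_2 of even degree d dividing x^n - 1 for odd n. Then the number of elements a in K with a · σ(a) = 1, where σ(a(x)) = a(x^{-1}), is exactly 2^{d/2} + 1. -/
open Polynomial

set_option maxHeartbeats 2000000 in
theorem aux (n : ℕ) (hn : Odd n) (hn0 : 0 < n) (f : Polynomial (ZMod 2))
    (hirr : Irreducible f) (hd : 2 ≤ f.natDegree) (hdeven : Even f.natDegree)
    (hself : f.reverse = f) (hdvd : f ∣ X ^ n - 1) :
    Nat.card {a : AdjoinRoot f //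
      ∃ p : Polynomial (ZMod 2), AdjoinRoot.mk f p = a ∧
        a * Polynomial.aeval ((AdjoinRoot.mk f X) ^ (n - 1)) p = 1}
      = 2 ^ (f.natDegree / 2) + 1 := by
  haveI : Fact (Irreducible f) := ⟨hirr⟩
  set K := AdjoinRoot f with hK
  set x : K := AdjoinRoot.root f with hxdef
  have hf0 : f ≠ 0 := hirr.ne_zero
  have hxn : x ^ n = 1 := by
    have h := AdjoinRoot.mk_eq_zero.mpr hdvd
    rw [map_sub, map_pow, map_one, sub_eq_zero] at h
    exact h
  set y : K := x ^ (n - 1) with hy'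
  have hxy : x * y = 1 := by
    rw [hy', ← pow_succ']
    rw [show n - 1 + 1 = n by omega]
    exact hxn
  have hx0 : x ≠ 0 := by
    intro h
    rw [h, zero_mul] at hxy
    exact zero_ne_one hxy
  have hy : y = x⁻¹ := eq_inv_of_mul_eq_one_left (by rw [mul_comm]; exact hxy)
  have hyx : y⁻¹ = x := by rw [hy, inv_inv]
  have hy0 : y ≠ 0 := by
    intro h
    rw [h, mul_zero] at hxy
    exact zero_ne_one hxy
  -- f vanishes at y = x⁻¹
  have haevalx : aeval x f = 0 := by
    rw [AdjoinRoot.aeval_eq, AdjoinRoot.mk_self]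
  have hyf : aeval y f = 0 := by
    haveI inst : Invertible x := ⟨y, by rw [mul_comm]; exact hxy, hxy⟩
    have h2 := (eval₂_reverse_eq_zero_iff (algebraMap (ZMod 2) K) x f).mpr
      (by rw [← aeval_def]; exact haevalx)
    rw [hself] at h2
    rw [← aeval_def] at h2
    rwa [invOf_eq_inv, ← hy] at h2
  set φ : K →ₐ[ZMod 2] K := AdjoinRoot.liftAlgHom f (Algebra.ofId (ZMod 2) K) y hyf with hφ
  have hφmk : ∀ p, φ (AdjoinRoot.mk f p) = aeval y p := by
    intro p
    rw [hφ]
    exact AdjoinRoot.liftAlgHom_mk f (Algebra.ofId (ZMod 2) K) y hyf p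
  have hφx : φ x = y := by
    rw [hφ, hxdef]
    exact AdjoinRoot.liftAlgHom_root f (Algebra.ofId (ZMod 2) K) y hyf
  have hφy : φ y = x := by rw [hy, map_inv₀, hφx, hyx]
  have hcomp : φ.comp φ = AlgHom.id (ZMod 2) K := by
    apply AdjoinRoot.algHom_ext
    simp only [AlgHom.comp_apply, AlgHom.id_apply]
    rw [← hxdef, hφx, hφy]
    rfl
  have hφφ : ∀ a : K, φ (φ a) = a := fun a => congrArg (fun g => g a) hcomp
  set e : K ≃ₐ[ZMod 2] K := AlgEquiv.ofAlgHom φ φ hcomp hcomp with he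
  have heapp : ∀ a, e a = φ a := fun a => rfl
  have hxinvne : x⁻¹ ≠ x := by
    intro h
    have hx2 : x ^ 2 = 1 := by
      rw [pow_two]
      nth_rewrite 2 [← h]
      exact mul_inv_cancel₀ hx0
    have hdvd2 : f ∣ (X + 1) ^ 2 := by
      have hfac : ((X + 1 : (ZMod 2)[X])) ^ 2 = X ^ 2 - 1 := by
        rw [CharTwo.add_sq, one_pow, CharTwo.sub_eq_add]
      rw [hfac, ← AdjoinRoot.mk_eq_zero, map_sub, map_pow, map_one, sub_eq_zero]
      exact hx2
    have hdvd1 : f ∣ X + 1 := hirr.prime.dvd_of_dvd_pow hdvd2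
    have hne : (X + 1 : (ZMod 2)[X]) ≠ 0 := by
      intro h0
      have := Polynomial.natDegree_X_add_C (1 : ZMod 2)
      rw [Polynomial.C_1] at this
      rw [h0] at this
      simp at this
    have hled := Polynomial.natDegree_le_of_dvd hdvd1 hne
    rw [show (X + 1 : (ZMod 2)[X]) = X + C 1 by rw [Polynomial.C_1]] at hled
    rw [Polynomial.natDegree_X_add_C] at hled
    omega
  have hexne : e x ≠ x := by
    rw [heapp, hφx, hy]
    exact hxinvne
  have he2 : e * e = 1 := by
    ext a
    show e (e a) = a
    rw [heapp, heapp]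
    exact hφφ a
  have hene : e ≠ 1 := by
    intro h
    apply hexne
    rw [h]
    rfl
  have horder : orderOf e = 2 := orderOf_eq_prime (by rw [pow_two]; exact he2) hene
  set G := Subgroup.zpowers e with hG
  have hmemG : ∀ g : G, (g : K ≃ₐ[ZMod 2] K) = 1 ∨ (g : K ≃ₐ[ZMod 2] K) = e := by
    rintro ⟨g, hg⟩
    obtain ⟨k, rfl⟩ := hg
    show e ^ k = 1 ∨ e ^ k = e
    rcases Int.even_or_odd k with ⟨m, rfl⟩ | ⟨m, rfl⟩
    · left
      rw [← two_mul, zpow_mul, zpow_two, he2, one_zpow]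
    · right
      rw [zpow_add, zpow_mul, zpow_two, he2, one_zpow, zpow_one, one_mul]
  haveI : Module.Finite (ZMod 2) K := (AdjoinRoot.powerBasis hf0).finite
  haveI : Finite K := Module.finite_of_finite (ZMod 2)
  haveI : Fintype K := Fintype.ofFinite K
  haveI : Finite (K ≃ₐ[ZMod 2] K) :=
    Finite.of_injective (fun g => (g : K → K)) DFunLike.coe_injective
  haveI : Fintype G := Fintype.ofFinite G
  have hsm : ∀ (g : G) (a : K), g • a = (g : K ≃ₐ[ZMod 2] K) a := fun g a => rfl
  haveI : FaithfulSMul G K := by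
    constructor
    intro g₁ g₂ h
    apply Subtype.ext
    rcases hmemG g₁ with h1 | h1 <;> rcases hmemG g₂ with h2 | h2 <;> rw [h1, h2]
    · exfalso
      apply hexne
      have := h x
      rw [hsm, hsm, h1, h2] at this
      rw [← this]
      rfl
    · exfalso
      apply hexne
      have := h x
      rw [hsm, hsm, h1, h2] at this
      rw [this]
      rfl
  have cardG : Fintype.card G = 2 := by
    rw [← Nat.card_eq_fintype_card, Nat.card_zpowers, horder]
  set F := FixedPoints.subfield G K with hF
  haveI : Fintype F := Fintype.ofFinite F
  have hfinrank : Module.finrank F K = 2 := by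
    rw [FixedPoints.finrank_eq_card G K, cardG]
  have hcardK : Fintype.card K = 2 ^ f.natDegree := by
    rw [Module.card_eq_pow_finrank (K := ZMod 2) (V := K), ZMod.card]
    congr 1
    rw [(AdjoinRoot.powerBasis hf0).finrank]
    rfl
  have hd2 : f.natDegree / 2 * 2 = f.natDegree := Nat.div_mul_cancel hdeven.two_dvd
  have hcardF : Fintype.card F = 2 ^ (f.natDegree / 2) := by
    have h1 : Fintype.card K = Fintype.card F ^ 2 := by
      rw [Module.card_eq_pow_finrank (K := F) (V := K), hfinrank]
    have h2 : Fintype.card F ^ 2 = (2 ^ (f.natDegree / 2)) ^ 2 := by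
      rw [← h1, hcardK, ← pow_mul, hd2]
    exact Nat.pow_left_injective (by norm_num) h2
  -- units
  have hcardKx : Nat.card Kˣ = 2 ^ f.natDegree - 1 := by
    rw [Nat.card_units, Nat.card_eq_fintype_card, hcardK]
  set Em : Kˣ →* Kˣ := Units.map (e : K →* K) with hEmdef
  have hEm : ∀ u : Kˣ, ((Em u : Kˣ) : K) = φ ((u : Kˣ) : K) := fun u => rfl
  set N : Kˣ →* Kˣ :=
    { toFun := fun u => u * Em u,
      map_one' := by simp,
      map_mul' := by
        intro a b
        show a * b * Em (a * b) = a * Em a * (b * Em b)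
        rw [map_mul]
        exact mul_mul_mul_comm a b (Em a) (Em b) } with hNdef
  have hNapp : ∀ u : Kˣ, N u = u * Em u := fun u => rfl
  have hkermem : ∀ u : Kˣ, u ∈ N.ker ↔ ((u : Kˣ) : K) * φ ((u : Kˣ) : K) = 1 := by
    intro u
    rw [MonoidHom.mem_ker, Units.ext_iff, hNapp, Units.val_mul, hEm, Units.val_one]
  have hdne : f.natDegree ≠ 0 := by omega
  have hodd : Odd (Nat.card Kˣ) := by
    rw [hcardKx]
    exact Nat.Even.sub_odd Nat.one_le_two_pow (Nat.even_pow.mpr ⟨even_two, hdne⟩) odd_one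
  have hcop : (Nat.card Kˣ).Coprime 2 := Nat.coprime_two_right.mpr hodd
  have hsq_surj : ∀ b : Kˣ, ∃ c : Kˣ, c ^ 2 = b :=
    fun b => ⟨(powCoprime hcop).symm b, (powCoprime hcop).apply_symm_apply b⟩
  have hsq_inj : ∀ t : Kˣ, t ^ 2 = 1 → t = 1 := by
    intro t ht
    have h1 : powCoprime hcop t = powCoprime hcop 1 := by
      show t ^ 2 = (1 : Kˣ) ^ 2
      rw [ht, one_pow]
    exact (powCoprime hcop).injective h1
  have hrangemem : ∀ u : Kˣ, u ∈ N.range ↔ φ ((u : Kˣ) : K) = ((u : Kˣ) : K) := by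
    intro u
    constructor
    · rintro ⟨v, rfl⟩
      rw [hNapp, Units.val_mul, hEm, map_mul, hφφ, mul_comm]
    · intro hu
      obtain ⟨c, hc⟩ := hsq_surj u
      have hEmu : Em u = u := Units.ext (by rw [hEm, hu])
      have h2 : (Em c) ^ 2 = c ^ 2 := by
        rw [← map_pow, hc, hEmu]
      have ht : (Em c * c⁻¹) ^ 2 = 1 := by
        rw [mul_pow, h2, inv_pow, mul_inv_cancel]
      have hec : Em c = c := by
        have := hsq_inj _ ht
        rwa [mul_inv_eq_one] at this
      exact ⟨c, by rw [hNapp, hec, ← pow_two, hc]⟩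
  have hFmem : ∀ a : K, a ∈ F ↔ φ a = a := by
    intro a
    constructor
    · intro ha
      have := ha ⟨e, Subgroup.mem_zpowers e⟩
      rwa [hsm] at this
    · intro ha g
      rw [hsm]
      rcases hmemG g with h | h <;> rw [h]
      · rfl
      · rw [heapp]; exact ha
  -- cardinality of the range of N
  set q := 2 ^ (f.natDegree / 2) with hqdef
  have hq2 : 2 ≤ q := by
    have : 1 ≤ f.natDegree / 2 := by omega
    calc 2 = 2 ^ 1 := by norm_num
    _ ≤ 2 ^ (f.natDegree / 2) := Nat.pow_le_pow_right (by norm_num) this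
  have Φ : N.range ≃ {a : F // a ≠ 0} :=
    { toFun := fun u =>
        ⟨⟨((u : Kˣ) : K), (hFmem _).mpr ((hrangemem _).mp u.2)⟩, by
          intro h
          exact Units.ne_zero (u : Kˣ) (congrArg Subtype.val h)⟩,
      invFun := fun a =>
        ⟨Units.mk0 ((a : F) : K) (fun h => a.2 (Subtype.ext h)),
          (hrangemem _).mpr ((hFmem _).mp (a : F).2)⟩,
      left_inv := fun u => Subtype.ext (Units.ext rfl),
      right_inv := fun a => Subtype.ext (Subtype.ext rfl) }
  have hcardrange : Nat.card N.range = q - 1 := by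
    classical
    rw [Nat.card_congr Φ, Nat.card_eq_fintype_card]
    have h1 : Fintype.card {a : F // a ≠ 0} = Fintype.card F - Fintype.card {a : F // a = 0} :=
      Fintype.card_subtype_compl (fun a : F => a = 0)
    rw [h1, Fintype.card_subtype_eq (0 : F), hcardF]
  have hcount : Nat.card Kˣ = Nat.card (Kˣ ⧸ N.ker) * Nat.card N.ker :=
    Subgroup.card_eq_card_quotient_mul_card_subgroup _
  have hquot : Nat.card (Kˣ ⧸ N.ker) = Nat.card N.range :=
    Nat.card_congr (QuotientGroup.quotientKerEquivRange N).toEquiv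
  have hdq : 2 ^ f.natDegree = q * q := by
    rw [hqdef, ← pow_add]
    congr 1
    omega
  have hkey : (q - 1) * (q + 1) = q * q - 1 := by
    have h1 : 1 ≤ q := by omega
    have h2 : 1 ≤ q * q := Nat.one_le_iff_ne_zero.mpr (by positivity)
    zify [h1, h2]
    ring
  have hcardker : Nat.card N.ker = q + 1 := by
    have h1 : (q - 1) * Nat.card N.ker = (q - 1) * (q + 1) := by
      rw [hkey, ← hdq, ← hcardKx, hcount, hquot, hcardrange]
    exact Nat.eq_of_mul_eq_mul_left (by omega) h1
  -- relate the statement's set to the kernel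
  have hSiff : ∀ a : K, (∃ p : Polynomial (ZMod 2), AdjoinRoot.mk f p = a ∧
      a * Polynomial.aeval ((AdjoinRoot.mk f X) ^ (n - 1)) p = 1) ↔ a * φ a = 1 := by
    intro a
    have hmkX : (AdjoinRoot.mk f X) = x := rfl
    constructor
    · rintro ⟨p, rfl, hp⟩
      rw [hφmk]
      rw [hmkX] at hp
      exact hp
    · intro h
      obtain ⟨p, rfl⟩ := AdjoinRoot.mk_surjective a
      refine ⟨p, rfl, ?_⟩
      rw [hmkX]
      show AdjoinRoot.mk f p * (aeval y) p = 1
      rw [← hφmk]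
      exact h
  have Ψ : {a : K // ∃ p : Polynomial (ZMod 2), AdjoinRoot.mk f p = a ∧
      a * Polynomial.aeval ((AdjoinRoot.mk f X) ^ (n - 1)) p = 1} ≃ N.ker :=
    { toFun := fun a =>
        ⟨Units.mk0 a.1 (by
          intro h0
          have := (hSiff a.1).mp a.2
          rw [h0, zero_mul] at this
          exact zero_ne_one this),
          (hkermem _).mpr (by
            show a.1 * φ a.1 = 1
            exact (hSiff a.1).mp a.2)⟩,
      invFun := fun u => ⟨((u : Kˣ) : K), (hSiff _).mpr ((hkermem _).mp u.2)⟩,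
      left_inv := fun a => Subtype.ext rfl,
      right_inv := fun u => Subtype.ext (Units.ext rfl) }
  rw [Nat.card_congr Ψ, hcardker]

set_option maxHeartbeats 1000000 in
/-- Let `K = F_2[x]/⟨f⟩` where `f` is a self-reciprocal irreducible polynomial over `F_2`
of even degree `d` dividing `x^n - 1` for odd `n`.  The number of elements `a ∈ K` with
`a · σ(a) = 1`, where `σ(a(x)) = a(x⁻¹)` and `x⁻¹ = x^(n-1)`, is exactly `2^(d/2) + 1`. -/
theorem stmt_3 (n : ℕ) (hn : Odd n) (hn0 : 0 < n) (f : Polynomial (ZMod 2))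
    (hirr : Irreducible f) (hd : 2 ≤ f.natDegree) (hdeven : Even f.natDegree)
    (hself : f.reverse = f) (hdvd : f ∣ X ^ n - 1) :
    Nat.card {a : Polynomial (ZMod 2) ⧸ Ideal.span {f} //
      ∃ p : Polynomial (ZMod 2), Ideal.Quotient.mk (Ideal.span {f}) p = a ∧
        a * Polynomial.aeval ((Ideal.Quotient.mk (Ideal.span {f}) X) ^ (n - 1)) p = 1}
      = 2 ^ (f.natDegree / 2) + 1 := by
  exact aux n hn hn0 f hirr hd hdeven hself hdvd
end

section
/- Let λ ≥ 1, A_0 = F_2[x]/⟨(x+1)^{2^λ}⟩, and for 2 ≤ s ≤ 2^λ let W^{(s)} = {a(x) ∈ F_2[x]/⟨(x+1)^s⟩ : a(x)a(x^{-1}) ≡ 1 (mod (x+1)^s)}, where x^{-1} = x^{2^λ - 1}. Suppose a(x) ∈ W^{(s-1)} and (x+1)^{s-1} exactly computes b ≡ (a(x)a(x^{2^λ-1}) - 1)/(x+1)^{s-1} (mod x+1) with b = 0 in F_2. Then both a(x) and a(x) + (x+1)^{s-1} belong to W^{(s)}. -/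
open Polynomial

lemma char2poly : (-1 : Polynomial (ZMod 2)) = 1 := CharTwo.neg_eq 1

lemma two_poly : (2 : Polynomial (ZMod 2)) = 0 := by
  have := CharP.cast_eq_zero (Polynomial (ZMod 2)) 2; simpa using this

lemma dvd_of_eval_one (p : Polynomial (ZMod 2)) (h : p.eval 1 = 0) :
    (X + 1 : Polynomial (ZMod 2)) ∣ p := by
  have hx : (X + 1 : Polynomial (ZMod 2)) = X - C 1 := by
    rw [C_1]; linear_combination - char2poly
  rw [hx, dvd_iff_isRoot]
  exact h

/-- Recursive step (case `b = 0`) for computing `W^(s)`: let `λ ≥ 1`, `2 ≤ s ≤ 2^λ`,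
and let `a` satisfy `a(x)a(x^(2^λ-1)) ≡ 1 (mod (x+1)^(s-1))`, with quotient
`q = (a(x)a(x^(2^λ-1)) - 1)/(x+1)^(s-1)` satisfying `q ≡ 0 (mod x+1)`.  Then both `a(x)`
and `a(x) + (x+1)^(s-1)` belong to `W^(s)`, i.e. satisfy
`a(x)a(x^(2^λ-1)) ≡ 1 (mod (x+1)^s)`. -/
theorem stmt_9 (l s : ℕ) (hl : 1 ≤ l) (hs2 : 2 ≤ s) (hs : s ≤ 2 ^ l)
    (a q : Polynomial (ZMod 2))
    (hq : a * a.comp (X ^ (2 ^ l - 1)) - 1 = q * (X + 1) ^ (s - 1))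
    (hb0 : (X + 1 : Polynomial (ZMod 2)) ∣ q) :
    ((X + 1 : Polynomial (ZMod 2)) ^ s ∣ a * a.comp (X ^ (2 ^ l - 1)) - 1) ∧
    ((X + 1 : Polynomial (ZMod 2)) ^ s ∣
      (a + (X + 1) ^ (s - 1)) * (a + (X + 1) ^ (s - 1)).comp (X ^ (2 ^ l - 1)) - 1) := by
  set n := 2 ^ l - 1 with hn
  have hpowpos : 2 ≤ 2 ^ l := by
    calc 2 = 2 ^ 1 := rfl
    _ ≤ 2 ^ l := Nat.pow_le_pow_right (by norm_num) hl
  have hn1 : n + 1 = 2 ^ l := by omega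
  have hs1 : s - 1 + 1 = s := by omega
  have h2z : (2 : ZMod 2) = 0 := by decide
  set a' := a.comp (X ^ n) with ha'
  -- part 1
  have h1 : (X + 1 : Polynomial (ZMod 2)) ^ s ∣ a * a' - 1 := by
    obtain ⟨r, hr⟩ := hb0
    refine ⟨r, ?_⟩
    rw [hq, hr, show ((X:Polynomial (ZMod 2))+1)^s = (X+1)^(s-1)*(X+1) by rw [← pow_succ, hs1]]
    ring
  refine ⟨h1, ?_⟩
  set c : Polynomial (ZMod 2) := (X + 1) ^ (s - 1) with hc
  have hc' : c.comp (X ^ n) = (X ^ n + 1) ^ (s - 1) := by simp [hc]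
  set u : Polynomial (ZMod 2) := (X + 1) ^ (2 ^ l - 1) + 1 with hu
  -- key identity: X * (X^n + 1) = (X+1) * u
  have hkey : (X : Polynomial (ZMod 2)) * (X ^ n + 1) = (X + 1) * u := by
    have hfrob : ((X : Polynomial (ZMod 2)) + 1) ^ 2 ^ l = X ^ 2 ^ l + 1 := by
      have := add_pow_char_pow (R := Polynomial (ZMod 2)) (p := 2) (x := X) (y := 1) (n := l)
      simpa using this
    have h2l : 2 ^ l - 1 + 1 = 2 ^ l := by omega
    calc (X : Polynomial (ZMod 2)) * (X ^ n + 1) = X ^ (n + 1) + X := by ring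
      _ = X ^ 2 ^ l + X := by rw [hn1]
      _ = (X + 1) ^ 2 ^ l + (X + 1) := by rw [hfrob]; linear_combination - two_poly
      _ = (X + 1) ^ (2 ^ l - 1 + 1) + (X + 1) := by rw [h2l]
      _ = (X + 1) * u := by rw [hu, pow_succ]; ring
  have hkey2 : (X : Polynomial (ZMod 2)) ^ (s - 1) * (X ^ n + 1) ^ (s - 1)
      = (X + 1) ^ (s - 1) * u ^ (s - 1) := by
    rw [← mul_pow, ← mul_pow, hkey]
  -- cross term
  have hcross : (X + 1 : Polynomial (ZMod 2)) ^ s ∣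
      X ^ (s - 1) * (a * c.comp (X ^ n) + c * a') := by
    have heq : (X : Polynomial (ZMod 2)) ^ (s - 1) * (a * c.comp (X ^ n) + c * a')
        = (X + 1) ^ (s - 1) * (a * u ^ (s - 1) + a' * X ^ (s - 1)) := by
      rw [hc', hc]
      linear_combination a * hkey2
    rw [heq, ← hs1, pow_succ]
    refine mul_dvd_mul_left _ (dvd_of_eval_one _ ?_)
    have hu1 : u.eval 1 = 1 := by
      have : ((X : Polynomial (ZMod 2)) + 1).eval 1 = 0 := by
        simp; exact h2z
      simp only [hu, eval_add, eval_pow, this, eval_one]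
      rw [zero_pow (by omega)]
      ring
    have ha'1 : a'.eval 1 = a.eval 1 := by simp [ha', eval_comp]
    simp only [eval_add, eval_mul, eval_pow, hu1, ha'1, eval_one, one_pow, eval_X]
    ring_nf
    linear_combination a.eval 1 * h2z
  have hcop : IsCoprime ((X + 1 : Polynomial (ZMod 2)) ^ s) (X ^ (s - 1)) := by
    apply IsCoprime.pow
    refine ⟨1, 1, ?_⟩
    linear_combination X * two_poly
  have hcross' : (X + 1 : Polynomial (ZMod 2)) ^ s ∣ (a * c.comp (X ^ n) + c * a') :=
    hcop.dvd_of_dvd_mul_left hcross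
  -- c * c' term
  have hcc : (X + 1 : Polynomial (ZMod 2)) ^ s ∣ c * c.comp (X ^ n) := by
    rw [hc', hc, ← hs1, pow_succ]
    refine mul_dvd_mul_left _ (dvd_of_eval_one _ ?_)
    simp only [eval_pow, eval_add, eval_one, one_pow, eval_X]
    rw [show (1 : ZMod 2) + 1 = 0 by decide, zero_pow (by omega)]
  -- assemble
  have hexp : (a + c) * (a + c).comp (X ^ n) - 1
      = (a * a' - 1) + (a * c.comp (X ^ n) + c * a') + c * c.comp (X ^ n) := by
    rw [add_comp, ha']
    ring
  rw [hexp]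
  exact dvd_add (dvd_add h1 hcross') hcc
end

section
/- Let λ ≥ 1, A_0 = F_2[x]/⟨(x+1)^{2^λ}⟩, and for 2 ≤ s ≤ 2^λ define W^{(s)} as the set of a(x) mod (x+1)^s with a(x)a(x^{2^λ-1}) ≡ 1 (mod (x+1)^s). If a(x) ∈ W^{(s-1)} and the quotient (a(x)a(x^{2^λ-1}) - 1)/(x+1)^{s-1} is ≡ 1 (mod x+1), then neither a(x) nor a(x)+(x+1)^{s-1} belongs to W^{(s)}. -/
open Polynomial

lemma xp1_dvd_iff (r : Polynomial (ZMod 2)) :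
    (X + 1 : Polynomial (ZMod 2)) ∣ r ↔ r.eval 1 = 0 := by
  have h1 : (X + 1 : Polynomial (ZMod 2)) = X - C 1 := by
    have : (-1 : ZMod 2) = 1 := rfl
    rw [sub_eq_add_neg, ← C_neg, this, C_1]
  rw [h1, dvd_iff_isRoot, IsRoot.def]

/-- Recursive step (case `b = 1`) for computing `W^(s)`: let `λ ≥ 1`, `2 ≤ s ≤ 2^λ`,
and let `a` satisfy `a(x)a(x^(2^λ-1)) ≡ 1 (mod (x+1)^(s-1))`, with quotient
`q = (a(x)a(x^(2^λ-1)) - 1)/(x+1)^(s-1)` satisfying `q ≡ 1 (mod x+1)`.  Then neither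
`a(x)` nor `a(x) + (x+1)^(s-1)` belongs to `W^(s)`. -/
theorem stmt_10 (l s : ℕ) (hl : 1 ≤ l) (hs2 : 2 ≤ s) (hs : s ≤ 2 ^ l)
    (a q : Polynomial (ZMod 2))
    (hq : a * a.comp (X ^ (2 ^ l - 1)) - 1 = q * (X + 1) ^ (s - 1))
    (hb1 : (X + 1 : Polynomial (ZMod 2)) ∣ q - 1) :
    ¬ ((X + 1 : Polynomial (ZMod 2)) ^ s ∣ a * a.comp (X ^ (2 ^ l - 1)) - 1) ∧
    ¬ ((X + 1 : Polynomial (ZMod 2)) ^ s ∣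
      (a + (X + 1) ^ (s - 1)) * (a + (X + 1) ^ (s - 1)).comp (X ^ (2 ^ l - 1)) - 1) := by
  set m : ℕ := 2 ^ l - 1 with hm
  have hpne : ((X + 1 : Polynomial (ZMod 2)) ^ (s - 1)) ≠ 0 :=
    pow_ne_zero _ (X_add_C_ne_zero (1 : ZMod 2))
  have hss : s = (s - 1) + 1 := (Nat.succ_pred_eq_of_pos (by omega)).symm
  have hq1 : q.eval 1 = 1 := by
    have h := (xp1_dvd_iff _).mp hb1
    simp only [eval_sub, eval_one] at h
    exact sub_eq_zero.mp h
  -- m is odd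
  have hmodd : m % 2 = 1 := by
    have h2 : 2 ≤ 2 ^ l := by
      calc 2 = 2 ^ 1 := rfl
      _ ≤ 2 ^ l := Nat.pow_le_pow_right (by norm_num) hl
    have h3 : 2 ∣ 2 ^ l := dvd_pow_self 2 (by omega)
    omega
  have hmcast : ((m : ZMod 2)) = 1 := by
    rw [← Nat.mod_add_div m 2, hmodd]
    push_cast
    rw [show ((2 : ZMod 2)) = 0 by decide]
    ring
  have hneg : (-1 : Polynomial (ZMod 2)) = 1 := by
    rw [← C_1, ← C_neg]
    congr 1
  have hsub1 : ∀ p : Polynomial (ZMod 2), p - 1 = p + 1 := fun p => by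
    rw [sub_eq_add_neg, hneg]
  -- geometric sum
  set c : Polynomial (ZMod 2) := ∑ i ∈ Finset.range m, X ^ i with hcdef
  have hgeom : c * ((X : Polynomial (ZMod 2)) - 1) = X ^ m - 1 := geom_sum_mul X m
  have hXm : (X : Polynomial (ZMod 2)) ^ m + 1 = (X + 1) * c := by
    rw [← hsub1, ← hgeom, hsub1 (X : Polynomial (ZMod 2))]; ring
  have hc1 : c.eval 1 = 1 := by
    rw [hcdef]
    simp [eval_finset_sum, hmcast]
  constructor
  · rw [hq]
    intro h
    have h' : (X + 1 : Polynomial (ZMod 2)) ^ (s - 1) * (X + 1) ∣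
        (X + 1) ^ (s - 1) * q := by
      rw [← pow_succ, ← hss, mul_comm]
      exact h
    have h2 := (mul_dvd_mul_iff_left hpne).mp h'
    have := (xp1_dvd_iff _).mp h2
    rw [hq1] at this
    exact one_ne_zero this
  · intro h
    have hcomp : ((a + (X + 1) ^ (s - 1)).comp (X ^ m) : Polynomial (ZMod 2))
        = a.comp (X ^ m) + (X + 1) ^ (s - 1) * c ^ (s - 1) := by
      rw [add_comp, pow_comp, add_comp, X_comp, one_comp, hXm, mul_pow]
    set R : Polynomial (ZMod 2) :=
      q + a * c ^ (s - 1) + a.comp (X ^ m) + (X + 1) ^ (s - 1) * c ^ (s - 1) with hR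
    have hE : (a + (X + 1) ^ (s - 1)) * (a + (X + 1) ^ (s - 1)).comp (X ^ m) - 1
        = (X + 1) ^ (s - 1) * R := by
      rw [hcomp, hR]
      linear_combination hq
    rw [hE] at h
    have h' : (X + 1 : Polynomial (ZMod 2)) ^ (s - 1) * (X + 1) ∣
        (X + 1) ^ (s - 1) * R := by
      rw [← pow_succ, ← hss]
      exact h
    have h2 := (mul_dvd_mul_iff_left hpne).mp h'
    have hev := (xp1_dvd_iff _).mp h2
    rw [hR] at hev
    simp only [eval_add, eval_mul, eval_pow, eval_comp, eval_X, eval_one, one_pow,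
      hq1, hc1] at hev
    rw [show ((1 : ZMod 2) + 1) = 0 by decide, zero_pow (by omega : s - 1 ≠ 0)] at hev
    revert hev
    generalize a.eval 1 = t
    revert t
    decide
end

section
/- Let f be a self-reciprocal irreducible polynomial over F_2 of even degree d dividing x^n - 1, n odd, let λ ≥ 1, N = 2^λ n, and for 1 ≤ s ≤ 2^λ let W^{(s)} = {a ∈ F_2[x]/⟨f(x)^s⟩ : a(x)a(x^{N-1}) ≡ 1 (mod f(x)^s)}. Then |W^{(s)}| = (2^{d/2}+1)·2^{(s-1)d/2}. -/
open Polynomial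

private lemma nat_mul_eq (a b A B : ℕ) (h : a * b = A * B) (ha : a ≤ A) (hb : b ≤ B)
    (hA : 0 < A) (hB : 0 < B) : a = A ∧ b = B := by
  have hb0 : 0 < b := by
    rcases Nat.eq_zero_or_pos b with h0 | h0
    · subst h0; simp at h; omega
    · exact h0
  have h1 : A * B ≤ A * b := by
    calc A * B = a * b := h.symm
    _ ≤ A * b := Nat.mul_le_mul_right _ ha
  have hbB : b = B := le_antisymm hb (Nat.le_of_mul_le_mul_left h1 hA)
  subst hbB
  have : a = A := by
    have := Nat.eq_of_mul_eq_mul_right hb0 h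
    exact this
  exact ⟨this, rfl⟩

private lemma card_sol_le {k : Type*} [Field k] (P : k[X]) (hP : P ≠ 0) :
    Nat.card {z : k // P.eval z = 0} ≤ P.natDegree := by
  classical
  have h1 : {z : k | P.eval z = 0} = ↑P.roots.toFinset := by
    ext z
    simp [Polynomial.mem_roots, hP, Multiset.mem_toFinset]
  calc Nat.card {z : k // P.eval z = 0} = ({z : k | P.eval z = 0} : Set k).ncard :=
        (Nat.card_coe_set_eq _)
  _ = (↑P.roots.toFinset : Set k).ncard := by rw [h1]
  _ = P.roots.toFinset.card := Set.ncard_coe_finset _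
  _ ≤ Multiset.card P.roots := Multiset.toFinset_card_le _
  _ ≤ P.natDegree := Polynomial.card_roots' P

private lemma qar (q : ℕ) (hq : 2 ≤ q) : (q - 1) * (q + 1) = q ^ 2 - 1 := by
  obtain ⟨r, rfl⟩ : ∃ r, q = r + 2 := ⟨q - 2, by omega⟩
  have h1 : r + 2 - 1 = r + 1 := rfl
  rw [h1]
  have h : (r + 2) ^ 2 = (r + 1) * (r + 2 + 1) + 1 := by ring
  omega

private lemma count_norm_one {k : Type*} [Field k] [Finite k] (q : ℕ) (hq : 2 ≤ q)
    (hcard : Nat.card k = q ^ 2) :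
    Nat.card {a : k // a * a ^ q = 1} = q + 1 := by
  classical
  cases nonempty_fintype k
  set Nm : kˣ →* kˣ := powMonoidHom (q + 1) with hNm
  set P1 : k[X] := X ^ (q + 1) - C 1 with hP1def
  set P2 : k[X] := X ^ (q - 1) - C 1 with hP2def
  have hcardu : Nat.card kˣ = q ^ 2 - 1 := by
    rw [Nat.card_eq_fintype_card, Fintype.card_units, ← Nat.card_eq_fintype_card, hcard]
  have hP1 : P1 ≠ 0 := by
    intro h
    have h2 : P1.natDegree = q + 1 := natDegree_X_pow_sub_C
    rw [h] at h2
    simp at h2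
  have hker_le : Nat.card Nm.ker ≤ q + 1 := by
    have hinj : Function.Injective
        (fun u : Nm.ker => (⟨((u.1 : kˣ) : k), by
          have hu : (u.1 : kˣ) ^ (q + 1) = 1 := u.2
          have h3 : ((u.1 : kˣ) : k) ^ (q + 1) = 1 := by
            rw [← Units.val_pow_eq_pow_val, hu, Units.val_one]
          simp [hP1def, h3]⟩ : {z : k // P1.eval z = 0})) := by
      intro u v huv
      have : ((u.1 : kˣ) : k) = ((v.1 : kˣ) : k) := congrArg Subtype.val huv
      exact Subtype.ext (Units.ext this)
    calc Nat.card Nm.ker ≤ Nat.card {z : k // P1.eval z = 0} :=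
          Nat.card_le_card_of_injective _ hinj
    _ ≤ P1.natDegree := card_sol_le _ hP1
    _ = q + 1 := natDegree_X_pow_sub_C
  have hq1 : 1 ≤ q - 1 := by omega
  have hP2 : P2 ≠ 0 := by
    intro h
    have h2 : P2.natDegree = q - 1 := natDegree_X_pow_sub_C
    rw [h] at h2
    simp at h2
    omega
  have hrange_le : Nat.card Nm.range ≤ q - 1 := by
    have hinj : Function.Injective
        (fun u : Nm.range => (⟨((u.1 : kˣ) : k), by
          obtain ⟨v, hv⟩ := u.2
          have hv1 : (u.1 : kˣ) ^ (q - 1) = 1 := by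
            rw [← hv]
            show (v ^ (q + 1)) ^ (q - 1) = 1
            rw [← pow_mul, mul_comm, qar q hq, ← hcardu]
            exact pow_card_eq_one'
          have h3 : ((u.1 : kˣ) : k) ^ (q - 1) = 1 := by
            rw [← Units.val_pow_eq_pow_val, hv1, Units.val_one]
          simp [hP2def, h3]⟩ : {z : k // P2.eval z = 0})) := by
      intro u v huv
      have : ((u.1 : kˣ) : k) = ((v.1 : kˣ) : k) := congrArg Subtype.val huv
      exact Subtype.ext (Units.ext this)
    calc Nat.card Nm.range ≤ Nat.card {z : k // P2.eval z = 0} :=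
          Nat.card_le_card_of_injective _ hinj
    _ ≤ P2.natDegree := card_sol_le _ hP2
    _ = q - 1 := natDegree_X_pow_sub_C
  have hmul : Nat.card Nm.range * Nat.card Nm.ker = (q - 1) * (q + 1) := by
    have h1 : Nat.card kˣ = Nat.card (kˣ ⧸ Nm.ker) * Nat.card Nm.ker :=
      Subgroup.card_eq_card_quotient_mul_card_subgroup _
    have h2 : Nat.card (kˣ ⧸ Nm.ker) = Nat.card Nm.range :=
      Nat.card_congr (QuotientGroup.quotientKerEquivRange Nm).toEquiv
    rw [← h2, ← h1, hcardu, qar q hq]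
  have hkercard : Nat.card Nm.ker = q + 1 :=
    (nat_mul_eq _ _ (q - 1) (q + 1) hmul hrange_le hker_le (by omega) (by omega)).2
  have hEquiv : {a : k // a * a ^ q = 1} ≃ Nm.ker := by
    refine ⟨fun a => ⟨Units.mkOfMulEqOne a.1 (a.1 ^ q) a.2, ?_⟩,
      fun u => ⟨((u.1 : kˣ) : k), ?_⟩, fun a => rfl, fun u => Subtype.ext (Units.ext rfl)⟩
    · show Units.mkOfMulEqOne a.1 (a.1 ^ q) a.2 ^ (q + 1) = 1
      ext
      rw [Units.val_pow_eq_pow_val]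
      show (a.1 : k) ^ (q + 1) = 1
      rw [pow_succ, mul_comm]
      exact a.2
    · have hu : (u.1 : kˣ) ^ (q + 1) = 1 := u.2
      have h3 : ((u.1 : kˣ) : k) ^ (q + 1) = 1 := by
        rw [← Units.val_pow_eq_pow_val, hu, Units.val_one]
      rw [pow_succ, mul_comm] at h3
      exact h3
  rw [Nat.card_congr hEquiv, hkercard]

private lemma count_affine {k : Type*} [Field k] [Finite k] [CharP k 2] (m : ℕ) (hm : 1 ≤ m)
    (q : ℕ) (hqdef : q = 2 ^ m) (hcard : Nat.card k = q ^ 2) (α β c : k)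
    (hα : α ≠ 0) (hβ : β ≠ 0) (h1 : β ^ (q + 1) = α ^ (q + 1)) (h2 : α * c ^ q = β ^ q * c) :
    Nat.card {t : k // α * t + β * t ^ q = c} = q := by
  classical
  cases nonempty_fintype k
  have hq2 : 2 ≤ q := by
    subst hqdef
    calc 2 = 2 ^ 1 := (pow_one 2).symm
    _ ≤ 2 ^ m := Nat.pow_le_pow_right (by norm_num) hm
  have hadd : ∀ x y : k, (x + y) ^ q = x ^ q + y ^ q := by
    intro x y; rw [hqdef]; exact add_pow_char_pow x y 2 m
  have hfix : ∀ z : k, z ^ q ^ 2 = z := by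
    intro z
    have h := FiniteField.pow_card z
    rwa [← Nat.card_eq_fintype_card, hcard] at h
  set L : k →+ k := AddMonoidHom.mk' (fun t => α * t + β * t ^ q) (by
    intro a b
    show α * (a + b) + β * (a + b) ^ q = (α * a + β * a ^ q) + (α * b + β * b ^ q)
    rw [hadd]; ring) with hL
  have hLT : ∀ t : k, L t = α * t + β * t ^ q := fun t => rfl
  -- kernel bound
  set PK : k[X] := C β * X ^ q + C α * X with hPK
  have hPKne : PK ≠ 0 := by
    intro h
    have hc : PK.coeff q = β := by
      rw [hPK, coeff_add, coeff_C_mul, coeff_C_mul, coeff_X_pow, coeff_X,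
        if_pos rfl, if_neg (by omega : ¬ 1 = q)]
      ring
    rw [h] at hc
    simp at hc
    exact hβ hc.symm
  have hPKdeg : PK.natDegree ≤ q := by
    rw [hPK]
    refine le_trans (natDegree_add_le _ _) (max_le ?_ ?_)
    · exact le_trans (natDegree_C_mul_le _ _) (le_of_eq (natDegree_X_pow q))
    · exact le_trans (natDegree_C_mul_le _ _) (le_trans natDegree_X_le (by omega))
  have hker_le : Nat.card L.ker ≤ q := by
    have hinj : Function.Injective
        (fun u : L.ker => (⟨u.1, by
          have hu : L u.1 = 0 := u.2
          rw [hLT] at hu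
          rw [hPK]
          simp only [eval_add, eval_mul, eval_C, eval_pow, eval_X]
          rw [add_comm]
          exact hu⟩ : {z : k // PK.eval z = 0})) := by
      intro u v huv
      have h := congrArg Subtype.val huv
      exact Subtype.ext h
    calc Nat.card L.ker ≤ Nat.card {z : k // PK.eval z = 0} :=
          Nat.card_le_card_of_injective _ hinj
    _ ≤ PK.natDegree := card_sol_le _ hPKne
    _ ≤ q := hPKdeg
  -- range bound
  set PC : k[X] := C α * X ^ q + C (β ^ q) * X with hPC
  have hPCne : PC ≠ 0 := by
    intro h
    have hc : PC.coeff q = α := by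
      rw [hPC, coeff_add, coeff_C_mul, coeff_C_mul, coeff_X_pow, coeff_X,
        if_pos rfl, if_neg (by omega : ¬ 1 = q)]
      ring
    rw [h] at hc
    simp at hc
    exact hα hc.symm
  have hPCdeg : PC.natDegree ≤ q := by
    rw [hPC]
    refine le_trans (natDegree_add_le _ _) (max_le ?_ ?_)
    · exact le_trans (natDegree_C_mul_le _ _) (le_of_eq (natDegree_X_pow q))
    · exact le_trans (natDegree_C_mul_le _ _) (le_trans natDegree_X_le (by omega))
  have hrange_sub : ∀ z : k, z ∈ L.range → PC.eval z = 0 := by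
    rintro z ⟨t, rfl⟩
    rw [hLT, hPC]
    simp only [eval_add, eval_mul, eval_C, eval_pow, eval_X]
    have e1 : (α * t + β * t ^ q) ^ q = α ^ q * t ^ q + β ^ q * t := by
      rw [hadd, mul_pow, mul_pow, ← pow_mul, ← sq, hfix t]
    rw [e1]
    calc α * (α ^ q * t ^ q + β ^ q * t) + β ^ q * (α * t + β * t ^ q)
        = (α ^ (q + 1) + β ^ (q + 1)) * t ^ q + (α * β ^ q * t + α * β ^ q * t) := by
          ring
    _ = 0 := by
          rw [h1, CharTwo.add_self_eq_zero, CharTwo.add_self_eq_zero, zero_mul, add_zero]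
  have hc_root : PC.eval c = 0 := by
    rw [hPC]
    simp only [eval_add, eval_mul, eval_C, eval_pow, eval_X]
    rw [h2, CharTwo.add_self_eq_zero]
  have hrange_le : Nat.card L.range ≤ q := by
    have hinj : Function.Injective
        (fun u : L.range => (⟨u.1, hrange_sub u.1 u.2⟩ : {z : k // PC.eval z = 0})) := by
      intro u v huv
      have h := congrArg Subtype.val huv
      exact Subtype.ext h
    calc Nat.card L.range ≤ Nat.card {z : k // PC.eval z = 0} :=
          Nat.card_le_card_of_injective _ hinj
    _ ≤ PC.natDegree := card_sol_le _ hPCne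
    _ ≤ q := hPCdeg
  -- multiplicativity
  have hmul : Nat.card L.range * Nat.card L.ker = q * q := by
    have hq1 : Nat.card k = Nat.card (k ⧸ L.ker) * Nat.card L.ker :=
      AddSubgroup.card_eq_card_quotient_mul_card_addSubgroup _
    have hq2' : Nat.card (k ⧸ L.ker) = Nat.card L.range :=
      Nat.card_congr (QuotientAddGroup.quotientKerEquivRange L).toEquiv
    rw [← hq2', ← hq1, hcard, sq]
  have hq0 : 0 < q := by omega
  obtain ⟨hrangecard, hkercard⟩ := nat_mul_eq _ _ q q hmul hrange_le hker_le hq0 hq0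
  -- c is in the range
  have hcrange : c ∈ L.range := by
    have hsub : (L.range : Set k) ⊆ {z : k | PC.eval z = 0} := fun z hz => hrange_sub z hz
    have hfin : ({z : k | PC.eval z = 0} : Set k).Finite := Set.toFinite _
    have hle : ({z : k | PC.eval z = 0} : Set k).ncard ≤ (L.range : Set k).ncard := by
      have e1 : (L.range : Set k).ncard = q := by
        rw [← Nat.card_coe_set_eq]
        exact hrangecard
      have e2 : ({z : k | PC.eval z = 0} : Set k).ncard ≤ q := by
        rw [← Nat.card_coe_set_eq]
        calc Nat.card {z : k // PC.eval z = 0} ≤ PC.natDegree := card_sol_le _ hPCne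
        _ ≤ q := hPCdeg
      omega
    have heq := Set.eq_of_subset_of_ncard_le hsub hle hfin
    have : c ∈ (L.range : Set k) := by
      rw [heq]
      exact hc_root
    exact this
  obtain ⟨t₀, ht₀⟩ := hcrange
  -- solution set is a coset of the kernel
  have hEquiv : {t : k // α * t + β * t ^ q = c} ≃ L.ker := by
    refine ⟨fun t => ⟨t.1 - t₀, ?_⟩, fun u => ⟨u.1 + t₀, ?_⟩, fun t => Subtype.ext (by
      simp), fun u => Subtype.ext (by simp)⟩
    · rw [AddMonoidHom.mem_ker, map_sub, ht₀]
      have : L t.1 = c := t.2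
      rw [this, sub_self]
    · have hu : L u.1 = 0 := u.2
      have : L (u.1 + t₀) = c := by rw [map_add, hu, ht₀, zero_add]
      exact this
  rw [Nat.card_congr hEquiv, hkercard]

private lemma zmod2_hom_aeval {k : Type*} [CommRing k] [Algebra (ZMod 2) k] (ψ : k →+* k)
    (x : k) (p : Polynomial (ZMod 2)) : ψ (aeval x p) = aeval (ψ x) p := by
  rw [aeval_def, aeval_def, hom_eval₂]
  congr 1
  exact RingHom.ext_zmod _ _

private lemma zmod2_aeval_pow {k : Type*} [CommRing k] [Algebra (ZMod 2) k] [CharP k 2]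
    (m : ℕ) (x : k) (p : Polynomial (ZMod 2)) :
    (aeval x p) ^ 2 ^ m = aeval (x ^ 2 ^ m) p := by
  have h := zmod2_hom_aeval (iterateFrobenius k 2 m) x p
  rwa [iterateFrobenius_def, iterateFrobenius_def] at h

private lemma charP_adjoinRoot (f : Polynomial (ZMod 2)) [Fact (Irreducible f)] :
    CharP (AdjoinRoot f) 2 :=
  charP_of_injective_algebraMap (algebraMap (ZMod 2) (AdjoinRoot f)).injective 2

private lemma finite_adjoinRoot (g : Polynomial (ZMod 2)) (hg : g.Monic) :
    Finite (AdjoinRoot g) := by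
  classical
  exact Finite.of_equiv _ (AdjoinRoot.powerBasis' hg).basis.equivFun.toEquiv.symm

private lemma card_adjoinRoot (g : Polynomial (ZMod 2)) (hg : g.Monic) :
    Nat.card (AdjoinRoot g) = 2 ^ g.natDegree := by
  classical
  have e := (AdjoinRoot.powerBasis' hg).basis.equivFun.toEquiv
  rw [Nat.card_congr e]
  have : Nat.card (Fin (AdjoinRoot.powerBasis' hg).dim → ZMod 2) =
      2 ^ (AdjoinRoot.powerBasis' hg).dim := by
    rw [Nat.card_eq_fintype_card, Fintype.card_fun]
    simp
  rw [this]
  rfl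

private lemma root_inv_pow (f : Polynomial (ZMod 2)) [Fact (Irreducible f)] (hmon : f.Monic)
    (hd2 : 2 ≤ f.natDegree) (heven : Even f.natDegree) (hrev : f.reverse = f) :
    (AdjoinRoot.root f) ^ 2 ^ (f.natDegree / 2) * AdjoinRoot.root f = 1 := by
  classical
  haveI := charP_adjoinRoot f
  haveI := finite_adjoinRoot f hmon
  cases nonempty_fintype (AdjoinRoot f)
  set d := f.natDegree with hd
  set x : AdjoinRoot f := AdjoinRoot.root f with hx
  have hf0 : f ≠ 0 := hmon.ne_zero
  have hirr : Irreducible f := Fact.out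
  have hcard : Fintype.card (AdjoinRoot f) = 2 ^ d := by
    rw [← Nat.card_eq_fintype_card, card_adjoinRoot f hmon]
  have hfixall : ∀ t : AdjoinRoot f, t ^ 2 ^ d = t := by
    intro t
    have h := FiniteField.pow_card t
    rwa [hcard] at h
  -- if the root is fixed by 2^m-power map for 0 < m < d, contradiction
  have hF : ∀ m : ℕ, 0 < m → m < d → x ^ 2 ^ m ≠ x := by
    intro m hm0 hmd hfx
    have hall : ∀ t : AdjoinRoot f, t ^ 2 ^ m = t := by
      intro t
      obtain ⟨p, rfl⟩ := AdjoinRoot.mk_surjective t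
      rw [← AdjoinRoot.aeval_eq, zmod2_aeval_pow, hfx]
    have h1 : (1 : ℕ) < 2 ^ m := Nat.one_lt_pow (by omega) (by norm_num)
    set PP : (AdjoinRoot f)[X] := X ^ 2 ^ m - X with hPP
    have hPne : PP ≠ 0 := FiniteField.X_pow_card_sub_X_ne_zero _ h1
    have hle : Nat.card (AdjoinRoot f) ≤ 2 ^ m := by
      have he : {z : AdjoinRoot f // PP.eval z = 0} ≃ AdjoinRoot f := by
        refine Equiv.subtypeUnivEquiv ?_
        intro z
        simp [hPP, hall z]
      calc Nat.card (AdjoinRoot f)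
          = Nat.card {z : AdjoinRoot f // PP.eval z = 0} := (Nat.card_congr he).symm
      _ ≤ PP.natDegree := card_sol_le _ hPne
      _ = 2 ^ m := FiniteField.X_pow_card_sub_X_natDegree_eq _ h1
    rw [Nat.card_eq_fintype_card, hcard] at hle
    have := Nat.pow_lt_pow_right (a := 2) (by norm_num) hmd
    omega
  -- injectivity of conjugates
  have hinj' : ∀ i j : ℕ, i ≤ j → j < d → x ^ 2 ^ i = x ^ 2 ^ j → i = j := by
    intro i j hij hjd heq
    by_contra hne
    have hij' : i < j := by omega
    have h1 : (x ^ 2 ^ j) ^ 2 ^ (d - j) = x := by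
      rw [← pow_mul, ← pow_add]
      have : j + (d - j) = d := by omega
      rw [this]
      exact hfixall x
    have h2 : x ^ 2 ^ (i + (d - j)) = x := by
      rw [pow_add, pow_mul, heq]
      exact h1
    have hm0 : 0 < i + (d - j) := by omega
    have hmd : i + (d - j) < d := by omega
    exact hF _ hm0 hmd h2
  have hinj : ∀ i j : ℕ, i < d → j < d → x ^ 2 ^ i = x ^ 2 ^ j → i = j := by
    intro i j hi hj heq
    rcases le_total i j with h | h
    · exact hinj' i j h hj heq
    · exact (hinj' j i h hi heq.symm).symm
  -- x ≠ 0
  have hx0 : x ≠ 0 := by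
    intro h0
    refine hF 1 (by omega) (by omega) ?_
    rw [h0]
    simp
  -- roots of f in AdjoinRoot f
  set φ := algebraMap (ZMod 2) (AdjoinRoot f) with hφ
  set F := f.map φ with hF'
  have haevalroot : aeval x f = 0 := by
    rw [AdjoinRoot.aeval_eq, AdjoinRoot.mk_self]
  have hFroot : ∀ i : ℕ, F.eval (x ^ 2 ^ i) = 0 := by
    intro i
    rw [hF', eval_map, ← aeval_def, ← zmod2_aeval_pow, haevalroot, zero_pow]
    positivity
  have hF0 : F ≠ 0 := Polynomial.map_ne_zero hf0
  have hFdeg : F.natDegree = d := natDegree_map φ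
  -- f divides X^(2^d) - X
  have hmp : minpoly (ZMod 2) x = f := by
    rw [hx, AdjoinRoot.minpoly_root hf0, hmon.leadingCoeff]
    simp
  have hdd : f ∣ (X ^ 2 ^ d - X : Polynomial (ZMod 2)) := by
    rw [← hmp]
    apply minpoly.dvd
    rw [map_sub, map_pow, aeval_X]
    rw [hfixall x, sub_self]
  have hFdvd : F ∣ (X ^ 2 ^ d - X : (AdjoinRoot f)[X]) := by
    have h := Polynomial.map_dvd φ hdd
    rwa [Polynomial.map_sub, Polynomial.map_pow, Polynomial.map_X] at h
  have hbigne : ((X : (AdjoinRoot f)[X]) ^ 2 ^ d - X) ≠ 0 :=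
    FiniteField.X_pow_card_sub_X_ne_zero _ (Nat.one_lt_pow (by omega) (by norm_num))
  have hbigsplits : ((X : (AdjoinRoot f)[X]) ^ 2 ^ d - X).Splits := by
    rw [splits_iff_card_roots]
    have hroots := FiniteField.roots_X_pow_card_sub_X (AdjoinRoot f)
    rw [hcard] at hroots
    rw [hroots, FiniteField.X_pow_card_sub_X_natDegree_eq _
      (Nat.one_lt_pow (by omega) (by norm_num))]
    rw [← hcard]
    exact (Finset.card_univ (α := AdjoinRoot f)).symm ▸ rfl
  have hFsplits : F.Splits :=
    Splits.of_dvd hbigsplits hbigne hFdvd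
  have hFcardroots : Multiset.card F.roots = d := by
    rw [← hFdeg]
    exact (splits_iff_card_roots.mp hFsplits)
  have hsep : F.Separable := (PerfectField.separable_of_irreducible hirr).map
  have hnodup : F.roots.Nodup := nodup_roots hsep
  set RS : Finset (AdjoinRoot f) := F.roots.toFinset with hRS
  have hRScard : RS.card = d := by
    rw [hRS, Multiset.toFinset_card_eq_card_iff_nodup.mpr hnodup, hFcardroots]
  set CJ : Finset (AdjoinRoot f) := (Finset.range d).image (fun i => x ^ 2 ^ i) with hCJ
  have hCJcard : CJ.card = d := by
    rw [hCJ, Finset.card_image_of_injOn, Finset.card_range]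
    intro i hi j hj hij
    exact hinj i j (Finset.mem_range.mp hi) (Finset.mem_range.mp hj) hij
  have hsub : CJ ⊆ RS := by
    intro z hz
    rw [hCJ] at hz
    obtain ⟨i, _, rfl⟩ := Finset.mem_image.mp hz
    rw [hRS, Multiset.mem_toFinset, Polynomial.mem_roots hF0]
    exact hFroot i
  have hCJRS : CJ = RS := Finset.eq_of_subset_of_card_le hsub (by omega)
  -- x⁻¹ is a root of F
  haveI : Invertible x := invertibleOfNonzero hx0
  have hinvroot : F.eval x⁻¹ = 0 := by
    have hiff := Polynomial.eval₂_reverse_eq_zero_iff φ x f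
    rw [hrev] at hiff
    rw [hF', eval_map, ← invOf_eq_inv]
    exact hiff.mpr haevalroot
  have hinvmem : x⁻¹ ∈ CJ := by
    rw [hCJRS, hRS, Multiset.mem_toFinset, Polynomial.mem_roots hF0]
    exact hinvroot
  rw [hCJ] at hinvmem
  obtain ⟨i, hi, hieq⟩ := Finset.mem_image.mp hinvmem
  have hid : i < d := Finset.mem_range.mp hi
  -- i ≠ 0
  have hi0 : i ≠ 0 := by
    intro h0
    subst h0
    simp only [pow_zero, pow_one] at hieq
    have hsq : x ^ 2 = 1 := by
      rw [sq]
      nth_rewrite 2 [hieq]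
      exact mul_inv_cancel₀ hx0
    have hxm1 : (x - 1) ^ 2 = 0 := by
      have h := sub_pow_char (p := 2) x (1 : AdjoinRoot f)
      rw [h, hsq, one_pow, sub_self]
    have hx1 : x = 1 := by
      have := pow_eq_zero_iff (n := 2) (by norm_num) |>.mp hxm1
      rwa [sub_eq_zero] at this
    refine hF 1 (by omega) (by omega) ?_
    rw [hx1]
    simp
  -- x ^ (2 ^ (2 i)) = x
  have h2i : x ^ 2 ^ (2 * i) = x := by
    have h1 : x ^ 2 ^ (2 * i) = (x ^ 2 ^ i) ^ 2 ^ i := by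
      rw [← pow_mul, ← pow_add, two_mul]
    rw [h1, hieq, inv_pow, hieq, inv_inv]
  have h2id : ¬ (2 * i < d) := by
    intro hlt
    exact hF (2 * i) (by omega) hlt h2i
  have hdle : d ≤ 2 * i := by omega
  have hr : x ^ 2 ^ (2 * i - d) = x := by
    have h1 : x ^ 2 ^ (2 * i) = (x ^ 2 ^ d) ^ 2 ^ (2 * i - d) := by
      rw [← pow_mul, ← pow_add]
      congr 1
      congr 1
      omega
    rw [hfixall x] at h1
    rw [← h1, h2i]
  have hr0 : 2 * i - d = 0 := by
    by_contra hne
    exact hF (2 * i - d) (by omega) (by omega) hr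
  have hieqd : i = d / 2 := by omega
  rw [← hieqd, hieq, inv_mul_cancel₀ hx0]

private lemma comp_X_pow_dvd (u : Polynomial (ZMod 2)) (M : ℕ) (hM : 1 ≤ M) :
    (X ^ (M - 1) - 1 : Polynomial (ZMod 2)) ∣ u.comp (X ^ M) - u := by
  obtain ⟨M', rfl⟩ : ∃ M', M = M' + 1 := ⟨M - 1, by omega⟩
  induction u using Polynomial.induction_on' with
  | add p q hp hq =>
    have h : (p + q).comp (X ^ (M' + 1)) - (p + q)
        = (p.comp (X ^ (M' + 1)) - p) + (q.comp (X ^ (M' + 1)) - q) := by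
      rw [add_comp]; ring
    rw [h]
    exact dvd_add hp hq
  | monomial n a =>
    rw [← C_mul_X_pow_eq_monomial, mul_comp, C_comp, X_pow_comp, ← pow_mul]
    have harith : (M' + 1) * n = n + M' * n := by ring
    have h : C a * X ^ ((M' + 1) * n) - C a * X ^ n
        = C a * X ^ n * (X ^ (M' * n) - 1) := by
      rw [harith, pow_add]; ring
    rw [h]
    have hdvd : (X ^ (M' + 1 - 1) - 1 : Polynomial (ZMod 2)) ∣ (X ^ (M' * n) - 1) := by
      have h2 := sub_dvd_pow_sub_pow ((X : Polynomial (ZMod 2)) ^ M') 1 n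
      rw [← pow_mul, one_pow] at h2
      simpa using h2
    exact hdvd.mul_left _

private lemma mk_eq_one_iff (g A : Polynomial (ZMod 2)) :
    Ideal.Quotient.mk (Ideal.span {g}) A = 1 ↔ g ∣ A - 1 := by
  rw [← map_one (Ideal.Quotient.mk (Ideal.span {g})), Ideal.Quotient.mk_eq_mk_iff_sub_mem,
    Ideal.mem_span_singleton]

private lemma mk_eq_mk_iff (g A B : Polynomial (ZMod 2)) :
    Ideal.Quotient.mk (Ideal.span {g}) A = Ideal.Quotient.mk (Ideal.span {g}) B ↔ g ∣ A - B := by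
  rw [Ideal.Quotient.mk_eq_mk_iff_sub_mem, Ideal.mem_span_singleton]

private lemma adjoinRoot_mk_eq (f p : Polynomial (ZMod 2)) :
    AdjoinRoot.mk f p = Ideal.Quotient.mk (Ideal.span {f}) p := rfl

private def Pred (g : Polynomial (ZMod 2)) (N : ℕ) (a : Polynomial (ZMod 2) ⧸ Ideal.span {g}) :
    Prop :=
  ∃ p : Polynomial (ZMod 2), Ideal.Quotient.mk (Ideal.span {g}) p = a ∧
    Ideal.Quotient.mk (Ideal.span {g}) (p * p.comp (X ^ (N - 1))) = 1

-- `mk f (u.comp (X^(N-1))) = (mk f u)^q` given the root relation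

private lemma mk_comp_pow (f : Polynomial (ZMod 2)) [Fact (Irreducible f)] (N : ℕ)
    (hxq : (AdjoinRoot.root f) ^ (N - 1) = (AdjoinRoot.root f) ^ 2 ^ (f.natDegree / 2))
    (u : Polynomial (ZMod 2)) :
    AdjoinRoot.mk f (u.comp (X ^ (N - 1)))
      = (AdjoinRoot.mk f u) ^ 2 ^ (f.natDegree / 2) := by
  haveI := charP_adjoinRoot f
  rw [← AdjoinRoot.aeval_eq, ← AdjoinRoot.aeval_eq, aeval_comp, map_pow, aeval_X, hxq,
    ← zmod2_aeval_pow]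

private lemma base_count (f : Polynomial (ZMod 2)) [Fact (Irreducible f)] (hmon : f.Monic)
    (hd2 : 2 ≤ f.natDegree) (N : ℕ)
    (hxq : (AdjoinRoot.root f) ^ (N - 1) = (AdjoinRoot.root f) ^ 2 ^ (f.natDegree / 2))
    (hcard : Nat.card (AdjoinRoot f) = (2 ^ (f.natDegree / 2)) ^ 2) :
    Nat.card {a : Polynomial (ZMod 2) ⧸ Ideal.span {f} // Pred f N a}
      = 2 ^ (f.natDegree / 2) + 1 := by
  haveI := finite_adjoinRoot f hmon
  set q := 2 ^ (f.natDegree / 2) with hq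
  have hq2 : 2 ≤ q := by
    rw [hq]
    calc 2 = 2 ^ 1 := (pow_one 2).symm
    _ ≤ 2 ^ (f.natDegree / 2) := Nat.pow_le_pow_right (by norm_num) (by omega)
  have hiff : ∀ a : Polynomial (ZMod 2) ⧸ Ideal.span {f},
      Pred f N a ↔ a * a ^ q = 1 := by
    intro a
    constructor
    · rintro ⟨p, rfl, hp⟩
      rw [← adjoinRoot_mk_eq] at hp ⊢
      rw [map_mul, mk_comp_pow f N hxq] at hp
      exact hp
    · intro h
      obtain ⟨p, rfl⟩ := AdjoinRoot.mk_surjective (a : AdjoinRoot f)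
      refine ⟨p, rfl, ?_⟩
      rw [← adjoinRoot_mk_eq, map_mul, mk_comp_pow f N hxq]
      exact h
  have he : {a : Polynomial (ZMod 2) ⧸ Ideal.span {f} // Pred f N a}
      ≃ {a : AdjoinRoot f // a * a ^ q = 1} := Equiv.subtypeEquivRight hiff
  rw [Nat.card_congr he]
  exact count_norm_one q hq2 hcard

set_option maxHeartbeats 2000000 in
private lemma step_count (f : Polynomial (ZMod 2)) [Fact (Irreducible f)] (hmon : f.Monic)
    (hd2 : 2 ≤ f.natDegree) (N s : ℕ) (hs1 : 1 ≤ s) (hN2 : 2 ≤ N)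
    (hdvdN : f ^ (s + 1) ∣ X ^ N - 1)
    (hxq : (AdjoinRoot.root f) ^ (N - 1) = (AdjoinRoot.root f) ^ 2 ^ (f.natDegree / 2))
    (hcard : Nat.card (AdjoinRoot f) = (2 ^ (f.natDegree / 2)) ^ 2) :
    Nat.card {a : Polynomial (ZMod 2) ⧸ Ideal.span {f ^ (s + 1)} // Pred (f ^ (s + 1)) N a}
      = 2 ^ (f.natDegree / 2)
        * Nat.card {a : Polynomial (ZMod 2) ⧸ Ideal.span {f ^ s} // Pred (f ^ s) N a} := by
  classical
  haveI := charP_adjoinRoot f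
  haveI : Finite (AdjoinRoot f) := finite_adjoinRoot f hmon
  set d := f.natDegree with hd
  set q := 2 ^ (d / 2) with hqdef
  set g : Polynomial (ZMod 2) := X ^ (N - 1) with hg
  have hf0 : f ≠ 0 := hmon.ne_zero
  have hq0 : q ≠ 0 := by positivity
  have hs0 : s ≠ 0 := by omega
  -- basic divisibility facts
  have hfg : f ∣ f.comp g := by
    rw [← AdjoinRoot.mk_eq_zero, hg, mk_comp_pow f N hxq, AdjoinRoot.mk_self, zero_pow hq0]
  obtain ⟨e, he⟩ := hfg
  set M := (N - 1) * (N - 1) with hM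
  have hM1 : 1 ≤ M := by
    rw [hM]
    have : 1 ≤ N - 1 := by omega
    nlinarith
  have hMd : (X ^ N - 1 : Polynomial (ZMod 2)) ∣ X ^ (M - 1) - 1 := by
    have harith : M - 1 = N * (N - 2) := by
      obtain ⟨N', rfl⟩ : ∃ N', N = N' + 2 := ⟨N - 2, by omega⟩
      have h1 : (N' + 2 - 1) * (N' + 2 - 1) = (N' + 1) * (N' + 1) := by norm_num
      have h2 : (N' + 1) * (N' + 1) = (N' + 2) * N' + 1 := by ring
      rw [hM, h1, h2]
      simp
    rw [harith]
    have h3 := sub_dvd_pow_sub_pow ((X : Polynomial (ZMod 2)) ^ N) 1 (N - 2)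
    rwa [← pow_mul, one_pow] at h3
  have hgg : g.comp g = X ^ M := by
    rw [hg, X_pow_comp, ← pow_mul]
  -- the quotient e satisfies e * e.comp g ≡ 1 mod f
  have hEcomp : f ∣ e * e.comp g - 1 := by
    have hdvd2 : f ^ 2 ∣ X ^ N - 1 := dvd_trans (pow_dvd_pow f (by omega)) hdvdN
    have hffgg : f ^ 2 ∣ f.comp (X ^ M) - f :=
      dvd_trans hdvd2 (dvd_trans hMd (comp_X_pow_dvd f M hM1))
    obtain ⟨ξ, hξ⟩ := hffgg
    have hcompgg : f.comp (X ^ M) = f * (e * e.comp g) := by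
      rw [← hgg, ← comp_assoc, he, mul_comp, he]
      ring
    have h1 : f * (e * e.comp g - 1) = f * (f * ξ) := by
      rw [mul_sub, mul_one, ← hcompgg]
      linear_combination hξ
    exact ⟨ξ, mul_left_cancel₀ hf0 h1⟩
  -- residue-field element E
  set E := AdjoinRoot.mk f e with hE'
  have hEq : E * E ^ q = 1 := by
    obtain ⟨ξ, hξ⟩ := hEcomp
    have h0 : AdjoinRoot.mk f (e * e.comp g - 1) = 0 := AdjoinRoot.mk_eq_zero.mpr ⟨ξ, hξ⟩
    rw [map_sub, map_one, sub_eq_zero, map_mul, hg, mk_comp_pow f N hxq] at h0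
    exact h0
  -- quotient map between the two levels
  have hle : Ideal.span {f ^ (s + 1)} ≤ Ideal.span {f ^ s} :=
    Ideal.span_singleton_le_span_singleton.mpr (pow_dvd_pow f (by omega))
  set π := Ideal.Quotient.factor hle with hπ
  have hπT : ∀ a, Pred (f ^ (s + 1)) N a → Pred (f ^ s) N (π a) := by
    rintro a ⟨p, rfl, hp⟩
    refine ⟨p, by rw [hπ, Ideal.Quotient.factor_mk], ?_⟩
    rw [mk_eq_one_iff] at hp ⊢
    exact dvd_trans (pow_dvd_pow f (by omega)) hp
  haveI : Finite (Polynomial (ZMod 2) ⧸ Ideal.span {f ^ (s + 1)}) :=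
    finite_adjoinRoot _ (hmon.pow _)
  haveI : Finite (Polynomial (ZMod 2) ⧸ Ideal.span {f ^ s}) :=
    finite_adjoinRoot _ (hmon.pow _)
  let Pi : {a : Polynomial (ZMod 2) ⧸ Ideal.span {f ^ (s + 1)} // Pred (f ^ (s + 1)) N a}
      → {a : Polynomial (ZMod 2) ⧸ Ideal.span {f ^ s} // Pred (f ^ s) N a} :=
    fun a => ⟨π a.1, hπT a.1 a.2⟩
  have hfiber : ∀ b : {a : Polynomial (ZMod 2) ⧸ Ideal.span {f ^ s} // Pred (f ^ s) N a},
      Nat.card {a // Pi a = b} = q := by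
    intro b
    obtain ⟨p₀, hp₀, hcnd⟩ := b.2
    have hcondp : f ^ s ∣ p₀ * p₀.comp g - 1 := by
      rw [hg]
      exact (mk_eq_one_iff _ _).mp hcnd
    obtain ⟨w, hw⟩ := hcondp
    set P := AdjoinRoot.mk f p₀ with hP'
    set W := AdjoinRoot.mk f w with hW'
    have hz0 : ∀ z : Polynomial (ZMod 2), AdjoinRoot.mk f (f ^ s * z) = 0 := by
      intro z
      rw [map_mul, map_pow, AdjoinRoot.mk_self, zero_pow hs0, zero_mul]
    have hPq : P * P ^ q = 1 := by
      have h0 : AdjoinRoot.mk f (p₀ * p₀.comp g - 1) = 0 :=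
        AdjoinRoot.mk_eq_zero.mpr (dvd_trans (dvd_pow_self f hs0) ⟨w, hw⟩)
      rw [map_sub, map_one, sub_eq_zero, map_mul, hg, mk_comp_pow f N hxq] at h0
      exact h0
    have hdvdXM : f ^ (s + 1) ∣ p₀.comp (X ^ M) - p₀ :=
      dvd_trans hdvdN (dvd_trans hMd (comp_X_pow_dvd p₀ M hM1))
    obtain ⟨ρ, hρ⟩ := hdvdXM
    have hXMeq : p₀.comp (X ^ M) = p₀ + f ^ (s + 1) * ρ := by linear_combination hρ
    have hE1 : p₀.comp g * (p₀ + f ^ (s + 1) * ρ) - 1 = f ^ s * (e ^ s * w.comp g) := by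
      have h0 : (p₀ * p₀.comp g - 1).comp g = f ^ s * (e ^ s * w.comp g) := by
        rw [hw, mul_comp, pow_comp, he]
        ring
      rw [sub_comp, mul_comp, one_comp, comp_assoc, hgg, hXMeq] at h0
      exact h0
    have hE3 : w + f * (p₀.comp g * ρ) = e ^ s * w.comp g := by
      have hE2 : f ^ s * (w + f * (p₀.comp g * ρ)) = f ^ s * (e ^ s * w.comp g) := by
        linear_combination hE1 - hw
      exact mul_left_cancel₀ (pow_ne_zero s hf0) hE2
    have hWc : E ^ s * W ^ q = W := by
      have h0 : AdjoinRoot.mk f (e ^ s * w.comp g - w) = 0 :=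
        AdjoinRoot.mk_eq_zero.mpr ⟨p₀.comp g * ρ, by linear_combination -hE3⟩
      rw [map_sub, sub_eq_zero, map_mul, map_pow, hg, mk_comp_pow f N hxq] at h0
      exact h0
    have hP0 : P ≠ 0 := left_ne_zero_of_mul_eq_one hPq
    have hE0 : E ≠ 0 := left_ne_zero_of_mul_eq_one hEq
    have hPq1 : P ^ (q + 1) = 1 := by rw [pow_succ, mul_comm]; exact hPq
    have hEq1 : E ^ (q + 1) = 1 := by rw [pow_succ, mul_comm]; exact hEq
    set α := P ^ q with hα'
    set β := P * E ^ s with hβ'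
    have hα : α ≠ 0 := pow_ne_zero _ hP0
    have hβ : β ≠ 0 := mul_ne_zero hP0 (pow_ne_zero _ hE0)
    have h1 : β ^ (q + 1) = α ^ (q + 1) := by
      rw [hα', hβ', mul_pow, ← pow_mul, mul_comm s (q + 1), pow_mul, hEq1, one_pow, mul_one,
        hPq1, ← pow_mul, mul_comm q (q + 1), pow_mul, hPq1, one_pow]
    have hWfix : W ^ (q * q) = W := by
      cases nonempty_fintype (AdjoinRoot f)
      have h := FiniteField.pow_card W
      have hc : Fintype.card (AdjoinRoot f) = q * q := by
        rw [← Nat.card_eq_fintype_card, hcard, pow_two]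
      rwa [hc] at h
    have h2 : α * W ^ q = β ^ q * W := by
      have h4 : W ^ q = E ^ (s * q) * W := by
        calc W ^ q = (E ^ s * W ^ q) ^ q := by rw [hWc]
        _ = E ^ (s * q) * W := by rw [mul_pow, ← pow_mul, ← pow_mul, hWfix]
      rw [hβ', mul_pow, hα', h4]
      ring
    have hcount := count_affine (d / 2) (by omega) q hqdef hcard α β W hα hβ h1 h2
    -- the linear embedding ε of the residue field into the big quotient
    set G0 : Polynomial (ZMod 2) →ₗ[Polynomial (ZMod 2)] (Polynomial (ZMod 2) ⧸ (Ideal.span {f ^ (s + 1)})) :=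
      (Submodule.mkQ (Ideal.span {f ^ (s + 1)})).comp (LinearMap.mul (Polynomial (ZMod 2)) (Polynomial (ZMod 2)) (f ^ s))
      with hG0'
    have hG0 : ∀ u, G0 u = Ideal.Quotient.mk (Ideal.span {f ^ (s + 1)}) (f ^ s * u) := fun u => rfl
    have hker : (Ideal.span {f} : Ideal (Polynomial (ZMod 2))) ≤ LinearMap.ker G0 := by
      rw [Ideal.span_le]
      intro z hz
      simp only [Set.mem_singleton_iff] at hz
      subst hz
      rw [SetLike.mem_coe, LinearMap.mem_ker, hG0, ← pow_succ]
      exact Ideal.Quotient.eq_zero_iff_mem.mpr (Ideal.mem_span_singleton.mpr dvd_rfl)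
    set ε : (Polynomial (ZMod 2) ⧸ (Ideal.span {f} : Ideal (Polynomial (ZMod 2))))
        →ₗ[Polynomial (ZMod 2)] (Polynomial (ZMod 2) ⧸ (Ideal.span {f ^ (s + 1)})) :=
      Submodule.liftQ (Ideal.span {f} : Ideal (Polynomial (ZMod 2))) G0 hker with hε'
    have hεmk : ∀ t, ε (AdjoinRoot.mk f t) = Ideal.Quotient.mk (Ideal.span {f ^ (s + 1)}) (f ^ s * t) := by
      intro t
      calc ε (AdjoinRoot.mk f t) = G0 t := Submodule.liftQ_apply _ _ _
      _ = Ideal.Quotient.mk (Ideal.span {f ^ (s + 1)}) (f ^ s * t) := hG0 t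
    have hεinj : ∀ ta tb : Polynomial (ZMod 2),
        ε (AdjoinRoot.mk f ta) = ε (AdjoinRoot.mk f tb)
        → AdjoinRoot.mk f ta = AdjoinRoot.mk f tb := by
      intro ta tb hab
      rw [hεmk, hεmk, mk_eq_mk_iff] at hab
      have h5 : f ^ s * f ∣ f ^ s * (ta - tb) := by
        rw [← pow_succ]
        have : f ^ s * ta - f ^ s * tb = f ^ s * (ta - tb) := by ring
        rwa [this] at hab
      have h6 : f ∣ ta - tb := (mul_dvd_mul_iff_left (pow_ne_zero s hf0)).mp h5
      exact (mk_eq_mk_iff f ta tb).mpr h6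
    -- key condition translation
    have hkey : ∀ t : Polynomial (ZMod 2),
        (Ideal.Quotient.mk (Ideal.span {f ^ (s + 1)}) ((p₀ + f ^ s * t) * (p₀ + f ^ s * t).comp (X ^ (N - 1))) = 1)
          ↔ α * (AdjoinRoot.mk f t) + β * (AdjoinRoot.mk f t) ^ q = W := by
      intro t
      rw [mk_eq_one_iff, ← hg]
      have hexp : (p₀ + f ^ s * t) * ((p₀ + f ^ s * t).comp g) - 1
          = f ^ s * (w + (p₀ * e ^ s) * t.comp g + t * p₀.comp g
              + f ^ s * (e ^ s * (t * t.comp g))) := by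
        rw [add_comp, mul_comp, pow_comp, he]
        linear_combination hw
      rw [hexp, pow_succ, mul_dvd_mul_iff_left (pow_ne_zero s hf0), ← AdjoinRoot.mk_eq_zero]
      rw [map_add, hz0, add_zero, map_add, map_add, map_mul, map_mul, map_mul, map_pow,
        hg, mk_comp_pow f N hxq, mk_comp_pow f N hxq]
      rw [← hW', ← hP', ← hE']
      rw [add_assoc, add_eq_zero_iff_eq_neg, CharTwo.neg_eq]
      constructor
      · intro h
        rw [hα', hβ']
        linear_combination h.symm
      · intro h
        rw [hα', hβ'] at h
        linear_combination h.symm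
    -- fiber is in bijection with the affine solution set
    have hEquivFib : {T : AdjoinRoot f // α * T + β * T ^ q = W} ≃ {a // Pi a = b} := by
      refine Equiv.ofBijective
        (fun T => ⟨⟨Ideal.Quotient.mk (Ideal.span {f ^ (s + 1)}) p₀ + ε T.1, ?_⟩, ?_⟩) ⟨?_, ?_⟩
      · obtain ⟨t, ht⟩ := AdjoinRoot.mk_surjective T.1
        rw [← ht, hεmk, ← map_add]
        exact ⟨p₀ + f ^ s * t, rfl, (hkey t).mpr (by rw [ht]; exact T.2)⟩
      · apply Subtype.ext
        show π (Ideal.Quotient.mk (Ideal.span {f ^ (s + 1)}) p₀ + ε T.1) = b.1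
        obtain ⟨t, ht⟩ := AdjoinRoot.mk_surjective T.1
        rw [← ht, hεmk, ← map_add, hπ, Ideal.Quotient.factor_mk, map_add]
        have hz : Ideal.Quotient.mk (Ideal.span {f ^ s}) (f ^ s * t) = 0 :=
          Ideal.Quotient.eq_zero_iff_mem.mpr
            (Ideal.mem_span_singleton.mpr (Dvd.intro t rfl))
        rw [hz, add_zero, hp₀]
      · intro T T' hTT
        have hval : Ideal.Quotient.mk (Ideal.span {f ^ (s + 1)}) p₀ + ε T.1 = Ideal.Quotient.mk (Ideal.span {f ^ (s + 1)}) p₀ + ε T'.1 :=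
          congrArg Subtype.val (congrArg Subtype.val hTT)
        have hv := add_left_cancel hval
        obtain ⟨t, ht⟩ := AdjoinRoot.mk_surjective T.1
        obtain ⟨t', ht'⟩ := AdjoinRoot.mk_surjective T'.1
        apply Subtype.ext
        rw [← ht, ← ht']
        apply hεinj
        rw [ht, ht']
        exact hv
      · rintro ⟨⟨av, hapred⟩, hab⟩
        obtain ⟨p', hp', hcnd'⟩ := hapred
        have hπb : Ideal.Quotient.mk (Ideal.span {f ^ s}) p'
            = Ideal.Quotient.mk (Ideal.span {f ^ s}) p₀ := by
          have h7 : π av = b.1 := congrArg Subtype.val hab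
          rw [← hp', hπ, Ideal.Quotient.factor_mk] at h7
          rw [h7, ← hp₀]
        rw [mk_eq_mk_iff] at hπb
        obtain ⟨t, ht⟩ := hπb
        have hpt : p' = p₀ + f ^ s * t := by linear_combination ht
        refine ⟨⟨AdjoinRoot.mk f t, (hkey t).mp ?_⟩, ?_⟩
        · rw [← hpt]
          exact hcnd'
        · apply Subtype.ext
          apply Subtype.ext
          show Ideal.Quotient.mk (Ideal.span {f ^ (s + 1)}) p₀ + ε (AdjoinRoot.mk f t) = av
          rw [hεmk, ← map_add, ← hpt, hp']
    calc Nat.card {a // Pi a = b} = Nat.card {T : AdjoinRoot f // α * T + β * T ^ q = W} :=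
          Nat.card_congr hEquivFib.symm
    _ = q := hcount
  haveI : Fintype {a : Polynomial (ZMod 2) ⧸ Ideal.span {f ^ s} // Pred (f ^ s) N a} :=
    Fintype.ofFinite _
  haveI : ∀ b : {a : Polynomial (ZMod 2) ⧸ Ideal.span {f ^ s} // Pred (f ^ s) N a},
      Fintype {a // Pi a = b} := fun b => Fintype.ofFinite _
  calc Nat.card {a : Polynomial (ZMod 2) ⧸ Ideal.span {f ^ (s + 1)} // Pred (f ^ (s + 1)) N a}
      = Nat.card (Σ b : {a : Polynomial (ZMod 2) ⧸ Ideal.span {f ^ s} // Pred (f ^ s) N a},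
          {a // Pi a = b}) := Nat.card_congr (Equiv.sigmaFiberEquiv Pi).symm
  _ = ∑ b : {a : Polynomial (ZMod 2) ⧸ Ideal.span {f ^ s} // Pred (f ^ s) N a},
        Nat.card {a // Pi a = b} := by
      rw [Nat.card_eq_fintype_card, Fintype.card_sigma]
      exact Finset.sum_congr rfl (fun b _ => (Nat.card_eq_fintype_card).symm)
  _ = ∑ _b : {a : Polynomial (ZMod 2) ⧸ Ideal.span {f ^ s} // Pred (f ^ s) N a}, q :=
      Finset.sum_congr rfl (fun b _ => hfiber b)
  _ = Fintype.card {a : Polynomial (ZMod 2) ⧸ Ideal.span {f ^ s} // Pred (f ^ s) N a} * q := by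
      rw [Finset.sum_const, smul_eq_mul, Finset.card_univ]
  _ = q * Nat.card {a : Polynomial (ZMod 2) ⧸ Ideal.span {f ^ s} // Pred (f ^ s) N a} := by
      rw [Nat.card_eq_fintype_card, mul_comm]

/-- Let `f` be a self-reciprocal irreducible polynomial over `F_2` of even degree `d`
dividing `x^n - 1` (`n` odd), `λ ≥ 1`, `N = 2^λ n`, and for `1 ≤ s ≤ 2^λ` let
`W^(s) = {a ∈ F_2[x]/⟨f^s⟩ : a(x)a(x^(N-1)) ≡ 1 (mod f^s)}`.  Then
`|W^(s)| = (2^(d/2) + 1) · 2^((s-1)d/2)`. -/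
theorem stmt_12 (n : ℕ) (hn : Odd n) (hn0 : 0 < n) (f : Polynomial (ZMod 2))
    (hirr : Irreducible f) (hd : 2 ≤ f.natDegree) (hdeven : Even f.natDegree)
    (hself : f.reverse = f) (hdvd : f ∣ X ^ n - 1)
    (l N s : ℕ) (hl : 1 ≤ l) (hN : N = 2 ^ l * n) (hs1 : 1 ≤ s) (hs : s ≤ 2 ^ l) :
    Nat.card {a : Polynomial (ZMod 2) ⧸ Ideal.span {f ^ s} //
      ∃ p : Polynomial (ZMod 2), Ideal.Quotient.mk (Ideal.span {f ^ s}) p = a ∧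
        Ideal.Quotient.mk (Ideal.span {f ^ s}) (p * p.comp (X ^ (N - 1))) = 1}
      = (2 ^ (f.natDegree / 2) + 1) * 2 ^ ((s - 1) * (f.natDegree / 2)) := by
  haveI := Fact.mk hirr
  set d := f.natDegree with hdd
  set q := 2 ^ (d / 2) with hqdef
  have hf0 : f ≠ 0 := hirr.ne_zero
  have hmon : f.Monic := by
    have h1 : f.leadingCoeff ≠ 0 := leadingCoeff_ne_zero.mpr hf0
    have h2 : ∀ a : ZMod 2, a ≠ 0 → a = 1 := by decide
    exact h2 _ h1
  have hXN : ((X : Polynomial (ZMod 2)) ^ n - 1) ^ 2 ^ l = X ^ N - 1 := by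
    have h := sub_pow_char_pow (R := Polynomial (ZMod 2)) (p := 2) ((X : Polynomial (ZMod 2)) ^ n) 1 l
    rw [h, one_pow, ← pow_mul, hN, Nat.mul_comm]
  have hdvdpow : ∀ s', s' ≤ 2 ^ l → f ^ s' ∣ X ^ N - 1 := by
    intro s' hs'
    rw [← hXN]
    exact dvd_trans (pow_dvd_pow f hs') (pow_dvd_pow_of_dvd hdvd _)
  have hriq := root_inv_pow f hmon hd hdeven hself
  have hx0 : AdjoinRoot.root f ≠ 0 := by
    intro h
    rw [h] at hriq
    simp at hriq
  have h2l : 2 ≤ 2 ^ l := by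
    calc 2 = 2 ^ 1 := (pow_one 2).symm
    _ ≤ 2 ^ l := Nat.pow_le_pow_right (by norm_num) hl
  have hN2 : 2 ≤ N := by
    rw [hN]
    calc 2 = 2 * 1 := rfl
    _ ≤ 2 ^ l * n := Nat.mul_le_mul h2l hn0
  have hxN : (AdjoinRoot.root f) ^ N = 1 := by
    have h := hdvdpow 1 (by omega)
    rw [pow_one] at h
    have h0 : AdjoinRoot.mk f (X ^ N - 1) = 0 := AdjoinRoot.mk_eq_zero.mpr h
    rw [map_sub, map_one, map_pow, AdjoinRoot.mk_X, sub_eq_zero] at h0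
    exact h0
  have hxq : (AdjoinRoot.root f) ^ (N - 1) = (AdjoinRoot.root f) ^ 2 ^ (d / 2) := by
    have h1 : (AdjoinRoot.root f) ^ (N - 1) * AdjoinRoot.root f = 1 := by
      rw [← pow_succ]
      have h2 : N - 1 + 1 = N := by omega
      rw [h2, hxN]
    exact mul_right_cancel₀ hx0 (h1.trans hriq.symm)
  have hcardk : Nat.card (AdjoinRoot f) = q ^ 2 := by
    rw [card_adjoinRoot f hmon, hqdef, ← pow_mul, Nat.div_mul_cancel hdeven.two_dvd]
  have main : ∀ s' : ℕ, 1 ≤ s' → s' ≤ 2 ^ l →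
      Nat.card {a : Polynomial (ZMod 2) ⧸ Ideal.span {f ^ s'} // Pred (f ^ s') N a}
        = (q + 1) * q ^ (s' - 1) := by
    intro s' hs'1
    induction s', hs'1 using Nat.le_induction with
    | base =>
      intro _
      have hcount := base_count f hmon hd N hxq hcardk
      have hcongr := congrArg
        (fun g => Nat.card {a : Polynomial (ZMod 2) ⧸ Ideal.span {g} // Pred g N a})
        (pow_one f)
      rw [hcongr, hcount]
      simp
      rfl
    | succ s' hs'' ih =>
      intro hle
      have h1 := step_count f hmon hd N s' hs'' hN2 (hdvdpow (s' + 1) hle) hxq hcardk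
      rw [h1, ih (by omega)]
      have h3 : s' + 1 - 1 = s' := by omega
      have h2 : s' - 1 + 1 = s' := by omega
      rw [h3]
      have hq' : q ^ s' = q ^ (s' - 1) * q := by
        nth_rewrite 1 [← h2]
        rw [pow_succ]
      rw [hq']
      ring
  have hfinal := main s hs1 hs
  show Nat.card {a : Polynomial (ZMod 2) ⧸ Ideal.span {f ^ s} // Pred (f ^ s) N a}
      = (2 ^ (d / 2) + 1) * 2 ^ ((s - 1) * (d / 2))
  rw [hfinal, hqdef, ← pow_mul, Nat.mul_comm (d / 2) (s - 1)]
end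

section
/- Let f be a self-reciprocal irreducible polynomial over F_2 of even degree d dividing x^n - 1 (n odd), N = 2^λ n, and 2 ≤ s ≤ 2^λ. If a(x)a(x^{N-1}) ≡ 1 (mod f(x)^{s-1}), and b(x) ≡ (a(x)a(x^{N-1}) - 1)/f(x)^{s-1} (mod f(x)), then b(x^{-1}) ≡ x^{(s-1)d} b(x) (mod f(x)), and consequently x^{(s-1)d/2} b(x) lies in the subfield of F_2[x]/⟨f(x)⟩ of order 2^{d/2}. -/
open Polynomial

open Finset

-- L2: comp difference divisibility
lemma aux_dvd_comp_sub_comp {R : Type*} [CommRing R] (p u v : R[X]) :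
    (u - v) ∣ p.comp u - p.comp v := by
  rw [comp, comp, eval₂_eq_sum_range, eval₂_eq_sum_range, ← Finset.sum_sub_distrib]
  apply Finset.dvd_sum
  intro i _
  rw [← mul_sub]
  exact Dvd.dvd.mul_left (sub_dvd_pow_sub_pow u v i) _

-- Frobenius square for aeval over ZMod 2
lemma aux_aeval_sq {K : Type*} [CommRing K] [CharP K 2] [Algebra (ZMod 2) K] (t : K) (p : (ZMod 2)[X]) :
    (aeval t p) ^ 2 = aeval (t ^ 2) p := by
  have h : (frobenius K 2).comp (algebraMap (ZMod 2) K) = algebraMap (ZMod 2) K := by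
    ext c
    simp only [RingHom.comp_apply, frobenius_def, ← map_pow]
    congr 1
    revert c; decide
  calc (aeval t p) ^ 2 = frobenius K 2 (eval₂ (algebraMap (ZMod 2) K) t p) := rfl
    _ = eval₂ ((frobenius K 2).comp (algebraMap (ZMod 2) K)) (frobenius K 2 t) p :=
        (hom_eval₂ _ _ _ _)
    _ = aeval (t ^ 2) p := by rw [h]; rfl

lemma aux_aeval_pow {K : Type*} [CommRing K] [CharP K 2] [Algebra (ZMod 2) K] (k : ℕ) (t : K) (p : (ZMod 2)[X]) :
    (aeval t p) ^ (2 ^ k) = aeval (t ^ (2 ^ k)) p := by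
  induction k with
  | zero => simp
  | succ k ih =>
      rw [pow_succ, pow_mul, pow_mul, ih, aux_aeval_sq]

lemma aux_count (f : (ZMod 2)[X]) (hirr : Irreducible f)
    (k : ℕ) (hk : 0 < k) (hfix : (AdjoinRoot.root f) ^ (2 ^ k) = AdjoinRoot.root f) :
    f.natDegree ≤ k := by
  haveI : Fact (Irreducible f) := ⟨hirr⟩
  have hf0 : f ≠ 0 := hirr.ne_zero
  haveI : Module.Finite (ZMod 2) (AdjoinRoot f) := (AdjoinRoot.powerBasis hf0).finite
  haveI : Finite (AdjoinRoot f) := Module.finite_of_finite (ZMod 2)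
  letI : Fintype (AdjoinRoot f) := Fintype.ofFinite _
  haveI : CharP (AdjoinRoot f) 2 :=
    charP_of_injective_ringHom (algebraMap (ZMod 2) (AdjoinRoot f)).injective 2
  have hcard : Fintype.card (AdjoinRoot f) = 2 ^ f.natDegree := by
    rw [Module.card_eq_pow_finrank (K := ZMod 2), ZMod.card,
      (AdjoinRoot.powerBasis hf0).finrank, AdjoinRoot.powerBasis_dim]
  have hfixall : ∀ y : AdjoinRoot f, y ^ (2 ^ k) = y := by
    intro y
    obtain ⟨p, rfl⟩ := AdjoinRoot.mk_surjective y
    rw [← AdjoinRoot.aeval_eq, aux_aeval_pow, hfix]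
  -- counting
  set P : (AdjoinRoot f)[X] := X ^ (2 ^ k) - X with hP
  have hdegX : (X : (AdjoinRoot f)[X]).degree < (X ^ (2 ^ k) : (AdjoinRoot f)[X]).degree := by
    rw [degree_X, degree_X_pow]
    exact_mod_cast Nat.one_lt_two_pow_iff.mpr hk.ne'
  have hPdeg : P.natDegree = 2 ^ k := by
    rw [hP, natDegree_sub_eq_left_of_natDegree_lt, natDegree_X_pow]
    rw [natDegree_X, natDegree_X_pow]
    exact Nat.one_lt_two_pow_iff.mpr hk.ne'
  have hP0 : P ≠ 0 := by
    intro h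
    rw [h] at hPdeg
    simp at hPdeg
    have : 0 < 2 ^ k := Nat.pow_pos (show 0 < 2 by norm_num)
    omega
  have hroots : ∀ y : AdjoinRoot f, y ∈ P.roots := by
    intro y
    rw [mem_roots hP0]
    simp [hP, IsRoot, hfixall y]
  have h1 : (Finset.univ : Finset (AdjoinRoot f)) ⊆ P.roots.toFinset := by
    intro y _
    exact Multiset.mem_toFinset.mpr (hroots y)
  have h2 : Fintype.card (AdjoinRoot f) ≤ 2 ^ k := by
    calc Fintype.card (AdjoinRoot f) = (Finset.univ : Finset (AdjoinRoot f)).card := rfl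
    _ ≤ P.roots.toFinset.card := Finset.card_le_card h1
    _ ≤ Multiset.card P.roots := P.roots.toFinset_card_le
    _ ≤ P.natDegree := P.card_roots'
    _ = 2 ^ k := hPdeg
  rw [hcard] at h2
  exact (Nat.pow_le_pow_iff_right one_lt_two).mp h2

lemma aux_conj (f : (ZMod 2)[X]) (hirr : Irreducible f) (hd : 2 ≤ f.natDegree)
    (hdeven : Even f.natDegree) (η : AdjoinRoot f)
    (hinv : η * AdjoinRoot.root f = 1) (hroot : aeval η f = 0) :
    (AdjoinRoot.root f) ^ (2 ^ (f.natDegree / 2)) = η := by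
  haveI : Fact (Irreducible f) := ⟨hirr⟩
  have hf0 : f ≠ 0 := hirr.ne_zero
  set d := f.natDegree with hdd
  set ζ := AdjoinRoot.root f with hζ
  haveI : Module.Finite (ZMod 2) (AdjoinRoot f) := (AdjoinRoot.powerBasis hf0).finite
  haveI : Finite (AdjoinRoot f) := Module.finite_of_finite (ZMod 2)
  letI : Fintype (AdjoinRoot f) := Fintype.ofFinite _
  haveI : CharP (AdjoinRoot f) 2 :=
    charP_of_injective_ringHom (algebraMap (ZMod 2) (AdjoinRoot f)).injective 2
  have hcard : Fintype.card (AdjoinRoot f) = 2 ^ d := by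
    rw [Module.card_eq_pow_finrank (K := ZMod 2), ZMod.card,
      (AdjoinRoot.powerBasis hf0).finrank, AdjoinRoot.powerBasis_dim]
  have hfd : ζ ^ (2 ^ d) = ζ := by
    rw [← hcard]; exact FiniteField.pow_card ζ
  have claimA : ∀ k, 0 < k → k < d → ζ ^ (2 ^ k) ≠ ζ := by
    intro k hk hkd heq
    exact absurd (aux_count f hirr k hk heq) (by omega)
  have hζroot : aeval ζ f = 0 := by
    rw [hζ, AdjoinRoot.aeval_eq, AdjoinRoot.mk_self]
  have hmonic : f.Monic := by
    have h0 : f.leadingCoeff ≠ 0 := leadingCoeff_ne_zero.mpr hf0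
    have : ∀ c : ZMod 2, c ≠ 0 → c = 1 := by decide
    exact this _ h0
  -- distinctness
  have hdist : ∀ i j, i < d → j < d → ζ ^ (2 ^ i) = ζ ^ (2 ^ j) → i = j := by
    have key : ∀ i j, i < j → j < d → ζ ^ (2 ^ i) = ζ ^ (2 ^ j) → False := by
      intro i j hij hjd heq
      have h1 : ζ ^ (2 ^ (i + (d - j))) = ζ := by
        have := congrArg (· ^ (2 ^ (d - j))) heq
        simp only [← pow_mul, ← pow_add] at this
        rw [this]
        have : j + (d - j) = d := by omega
        rw [this, hfd]
      exact claimA (i + (d - j)) (by omega) (by omega) h1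
    intro i j hi hj heq
    rcases lt_trichotomy i j with h | h | h
    · exact absurd (key i j h hj heq) not_false
    · exact h
    · exact absurd (key j i h hi heq.symm) not_false
  -- the set of roots
  set φ := algebraMap (ZMod 2) (AdjoinRoot f) with hφ
  have hmapne : f.map φ ≠ 0 := by
    simpa using (Polynomial.map_ne_zero_iff φ.injective).mpr hf0
  have hrootmem : ∀ y : AdjoinRoot f, aeval y f = 0 → y ∈ (f.map φ).roots.toFinset := by
    intro y hy
    rw [Multiset.mem_toFinset, mem_roots hmapne, IsRoot, eval_map, ← aeval_def]
    exact hy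
  set S : Finset (AdjoinRoot f) := (Finset.range d).image (fun i => ζ ^ (2 ^ i)) with hS
  have hScard : S.card = d := by
    rw [hS, Finset.card_image_of_injOn, Finset.card_range]
    intro i hi j hj heq
    exact hdist i j (Finset.mem_range.mp hi) (Finset.mem_range.mp hj) heq
  have hSsub : S ⊆ (f.map φ).roots.toFinset := by
    intro y hy
    rw [hS, Finset.mem_image] at hy
    obtain ⟨i, _, rfl⟩ := hy
    apply hrootmem
    rw [← aux_aeval_pow, hζroot, zero_pow (by positivity)]
  have hTcard : (f.map φ).roots.toFinset.card ≤ d := by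
    calc (f.map φ).roots.toFinset.card ≤ Multiset.card (f.map φ).roots :=
      (f.map φ).roots.toFinset_card_le
    _ ≤ (f.map φ).natDegree := (f.map φ).card_roots'
    _ = d := by rw [hmonic.natDegree_map]
  have hSeq : S = (f.map φ).roots.toFinset :=
    Finset.eq_of_subset_of_card_le hSsub (by rw [hScard]; exact hTcard)
  have hηS : η ∈ S := by rw [hSeq]; exact hrootmem η hroot
  rw [hS, Finset.mem_image] at hηS
  obtain ⟨j, hjd, hjη⟩ := hηS
  rw [Finset.mem_range] at hjd
  -- ζ ≠ 0, η ≠ 0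
  have hζ0 : ζ ≠ 0 := by
    intro h
    rw [h, mul_zero] at hinv
    exact zero_ne_one hinv
  have hη0 : η ≠ 0 := by
    intro h
    rw [h, zero_mul] at hinv
    exact zero_ne_one hinv
  -- j ≠ 0
  have hj0 : j ≠ 0 := by
    rintro rfl
    rw [pow_zero, pow_one] at hjη
    -- η = ζ, so ζ^2 = 1, so ζ = 1
    rw [← hjη] at hinv
    have hζsq : ζ ^ 2 = 1 := by rw [pow_two]; exact hinv
    have h2z : (2 : AdjoinRoot f) = 0 := by
      have := CharP.cast_eq_zero (AdjoinRoot f) 2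
      norm_cast at this
    have hζ1 : ζ = 1 := by
      have h2 : (ζ - 1) ^ 2 = 0 := by
        linear_combination hζsq + (1 - ζ) * h2z
      have := pow_eq_zero_iff (n := 2) (by norm_num) |>.mp h2
      linear_combination this
    -- then 1 is a root of f
    have h1root : f.eval 1 = 0 := by
      have h0 : aeval (1 : AdjoinRoot f) f = 0 := by rw [← hζ1]; exact hζroot
      have h1 : aeval (1 : AdjoinRoot f) f = φ (f.eval 1) := by
        rw [aeval_def, eval₂_eq_eval_map, eval_one_map]
      rw [h1] at h0
      exact φ.injective (by rw [h0, map_zero])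
    have hdvd1 : (X - C 1 : (ZMod 2)[X]) ∣ f := dvd_iff_isRoot.mpr h1root
    obtain ⟨c, hc⟩ := hdvd1
    rcases hirr.isUnit_or_isUnit hc with h | h
    · have := natDegree_eq_zero_of_isUnit h
      rw [natDegree_X_sub_C] at this
      exact one_ne_zero this
    · have hc0 : c ≠ 0 := by rintro rfl; rw [mul_zero] at hc; exact hf0 hc
      have := natDegree_eq_zero_of_isUnit h
      have hdeg : f.natDegree = 1 := by
        rw [hc, natDegree_mul (X_sub_C_ne_zero 1) hc0, natDegree_X_sub_C, this]
      omega
  -- ζ^(2^(2j)) = ζ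
  have h2j : ζ ^ (2 ^ (j + j)) = ζ := by
    have h1 : ζ ^ (2 ^ (j + j)) = (ζ ^ (2 ^ j)) ^ (2 ^ j) := by
      rw [← pow_mul, pow_add]
    have h2 : η ^ (2 ^ j) * η = 1 := by
      have := congrArg (· ^ (2 ^ j)) hinv
      simp only [mul_pow, one_pow] at this
      rw [hjη] at this
      exact this
    have h3 : η ^ (2 ^ j) = ζ := by
      have h4 : ζ * η = 1 := by rw [mul_comm]; exact hinv
      exact mul_right_cancel₀ hη0 (h2.trans h4.symm)
    rw [h1, hjη, h3]
  -- conclude j = d / 2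
  have h2jd : j + j = d := by
    by_contra hne
    rcases lt_or_ge (j + j) d with hlt | hge
    · rcases Nat.eq_zero_or_pos (j + j) with h0 | hpos
      · omega
      · exact claimA (j + j) hpos hlt h2j
    · have hr : j + j - d < d := by omega
      have hr0 : 0 < j + j - d := by omega
      have : ζ ^ (2 ^ (j + j - d)) = ζ := by
        have hsplit : j + j = d + (j + j - d) := by omega
        rw [hsplit, pow_add, pow_mul, hfd] at h2j
        exact h2j
      exact claimA _ hr0 hr this
  have : d / 2 = j := by omega
  rw [this, hjη]

lemma aux_rev (f : (ZMod 2)[X]) (hself : f.reverse = f) (N : ℕ) (hN1 : 1 ≤ N) :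
    (X ^ N - 1 : (ZMod 2)[X]) ∣ X ^ f.natDegree * f.comp (X ^ (N - 1)) - f := by
  set d := f.natDegree with hdd
  have hcoeff : ∀ i, i ≤ d → f.coeff (d - i) = f.coeff i := by
    intro i hi
    conv_rhs => rw [← hself]
    rw [coeff_reverse, revAt_le hi]
  have hcomp : X ^ d * f.comp (X ^ (N - 1)) =
      ∑ i ∈ Finset.range (d + 1), C (f.coeff i) * X ^ (i * (N - 1) + d) := by
    rw [comp, eval₂_eq_sum_range, Finset.mul_sum]
    apply Finset.sum_congr rfl
    intro i _
    rw [← pow_mul]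
    ring
  have hfsum : f = ∑ i ∈ Finset.range (d + 1), C (f.coeff i) * X ^ (d - i) := by
    have h1 : f = ∑ i ∈ Finset.range (d + 1), C (f.coeff i) * X ^ i := by
      conv_lhs => rw [as_sum_range' f (d + 1) (Nat.lt_succ_self d)]
      apply Finset.sum_congr rfl
      intro i _
      rw [C_mul_X_pow_eq_monomial]
    have h2 : ∑ i ∈ Finset.range (d + 1), C (f.coeff i) * X ^ (d - i)
        = ∑ i ∈ Finset.range (d + 1), C (f.coeff i) * X ^ i := by
      rw [← Finset.sum_range_reflect]
      apply Finset.sum_congr rfl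
      intro j hj
      have hj' : j ≤ d := by
        rw [Finset.mem_range] at hj; omega
      have e1 : d + 1 - 1 - j = d - j := by omega
      have e2 : d - (d - j) = j := by omega
      rw [e1, e2, hcoeff j hj']
    rw [h2, ← h1]
  rw [hcomp]
  nth_rewrite 2 [hfsum]
  rw [← Finset.sum_sub_distrib]
  apply Finset.dvd_sum
  intro i hi
  have hi' : i ≤ d := by rw [Finset.mem_range] at hi; omega
  rw [← mul_sub]
  apply Dvd.dvd.mul_left
  have hexp : i * (N - 1) + d = (d - i) + N * i := by
    zify [hi', hN1]
    ring
  rw [hexp, pow_add]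
  have hfact : (X : (ZMod 2)[X]) ^ (d - i) * X ^ (N * i) - X ^ (d - i)
      = X ^ (d - i) * ((X ^ N) ^ i - 1) := by
    rw [← pow_mul]; ring
  rw [hfact]
  have := sub_dvd_pow_sub_pow (X ^ N : (ZMod 2)[X]) 1 i
  rw [one_pow] at this
  exact this.mul_left _

set_option maxHeartbeats 1000000 in
/-- Let `f` be a self-reciprocal irreducible polynomial over `F_2` of even degree `d`
dividing `x^n - 1` (`n` odd), `N = 2^λ n`, `2 ≤ s ≤ 2^λ`.  If
`a(x)a(x^(N-1)) ≡ 1 (mod f^(s-1))` with quotient `q`, and `b ≡ q (mod f)`, then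
`b(x⁻¹) ≡ x^((s-1)d) b(x) (mod f)`, and consequently `x^((s-1)d/2) b(x)` lies in the
subfield of `F_2[x]/⟨f⟩` of order `2^(d/2)` (the fixed field of `β ↦ β^(2^(d/2))`). -/
theorem stmt_13 (n : ℕ) (hn : Odd n) (hn0 : 0 < n) (f : Polynomial (ZMod 2))
    (hirr : Irreducible f) (hd : 2 ≤ f.natDegree) (hdeven : Even f.natDegree)
    (hself : f.reverse = f) (hdvd : f ∣ X ^ n - 1)
    (l N s : ℕ) (hl : 1 ≤ l) (hN : N = 2 ^ l * n) (hs2 : 2 ≤ s) (hs : s ≤ 2 ^ l)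
    (a q b : Polynomial (ZMod 2))
    (hq : a * a.comp (X ^ (N - 1)) - 1 = q * f ^ (s - 1))
    (hb : f ∣ q - b) :
    (f ∣ b.comp (X ^ (N - 1)) - X ^ ((s - 1) * f.natDegree) * b) ∧
    (Ideal.Quotient.mk (Ideal.span {f}) (X ^ ((s - 1) * (f.natDegree / 2)) * b))
        ^ (2 ^ (f.natDegree / 2))
      = Ideal.Quotient.mk (Ideal.span {f}) (X ^ ((s - 1) * (f.natDegree / 2)) * b) := by
    classical
  have hf0 : f ≠ 0 := hirr.ne_zero
  obtain ⟨d2, hd2⟩ := id hdeven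
  have hd2' : f.natDegree = 2 * d2 := by omega
  have hddiv : f.natDegree / 2 = d2 := by omega
  have h2l : 2 ≤ 2 ^ l := by
    calc (2 : ℕ) = 2 ^ 1 := (pow_one 2).symm
    _ ≤ 2 ^ l := Nat.pow_le_pow_right (by norm_num) hl
  have hN2 : 2 ≤ N := by
    rw [hN]
    calc 2 ≤ 2 ^ l * 1 := by omega
    _ ≤ 2 ^ l * n := Nat.mul_le_mul_left _ hn0
  set d := f.natDegree with hdd
  set m := s - 1 with hmm
  have hsm : s = m + 1 := by omega
  -- f^s divides g := X^N - 1
  have hfsg : f ^ s ∣ (X ^ N - 1 : (ZMod 2)[X]) := by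
    have h1 : f ^ (2 ^ l) ∣ (X ^ n - 1 : (ZMod 2)[X]) ^ (2 ^ l) := pow_dvd_pow_of_dvd hdvd _
    have h2 : ((X : (ZMod 2)[X]) ^ n - 1) ^ (2 ^ l) = X ^ N - 1 := by
      rw [sub_pow_char_pow, one_pow, ← pow_mul, hN, Nat.mul_comm]
    rw [h2] at h1
    exact (pow_dvd_pow f hs).trans h1
  have hfg : f ∣ (X ^ N - 1 : (ZMod 2)[X]) := (dvd_pow_self f (by omega : s ≠ 0)).trans hfsg
  -- involution mod X^N - 1
  have hinvol : ∀ p : (ZMod 2)[X],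
      (X ^ N - 1 : (ZMod 2)[X]) ∣ (p.comp (X ^ (N - 1))).comp (X ^ (N - 1)) - p := by
    intro p
    have h1 : (p.comp (X ^ (N - 1))).comp (X ^ (N - 1)) = p.comp (X ^ ((N - 1) * (N - 1))) := by
      rw [comp_assoc, X_pow_comp, ← pow_mul]
    rw [h1]
    have h2 : (X ^ N - 1 : (ZMod 2)[X]) ∣ X ^ ((N - 1) * (N - 1)) - X := by
      have hid : (N - 1) * (N - 1) = N * (N - 2) + 1 := by
        obtain ⟨k, rfl⟩ : ∃ k, N = k + 2 := ⟨N - 2, by omega⟩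
        simp [Nat.add_sub_cancel]
        ring
      rw [hid, pow_succ]
      have h3 : (X ^ N - 1 : (ZMod 2)[X]) ∣ X ^ (N * (N - 2)) - 1 := by
        have := sub_dvd_pow_sub_pow (X ^ N : (ZMod 2)[X]) 1 (N - 2)
        rw [one_pow, ← pow_mul] at this
        exact this
      have hfact : (X : (ZMod 2)[X]) ^ (N * (N - 2)) * X - X
          = (X ^ (N * (N - 2)) - 1) * X := by ring
      rw [hfact]
      exact h3.mul_right _
    have h4 := aux_dvd_comp_sub_comp p (X ^ ((N - 1) * (N - 1))) X
    rw [comp_X] at h4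
    exact (h2.trans h4)
  -- reverse fact
  have hrev : (X ^ N - 1 : (ZMod 2)[X]) ∣ X ^ d * f.comp (X ^ (N - 1)) - f :=
    aux_rev f hself N (by omega)
  -- f divides f.comp (X^(N-1))
  have hp : Prime f := hirr.prime
  have hfσf : f ∣ f.comp (X ^ (N - 1)) := by
    have h1 : f ∣ X ^ d * f.comp (X ^ (N - 1)) := by
      have h2 : f ∣ X ^ d * f.comp (X ^ (N - 1)) - f := hfg.trans hrev
      have := dvd_add h2 (dvd_refl f)
      simpa using this
    rcases hp.dvd_mul.mp h1 with h | h
    · exfalso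
      have hXf : f ∣ X := hp.dvd_of_dvd_pow h
      have := natDegree_le_of_dvd hXf X_ne_zero
      rw [natDegree_X] at this
      omega
    · exact h
  -- quotient computation mod X^N - 1
  set g : (ZMod 2)[X] := X ^ N - 1 with hgg
  set π := Ideal.Quotient.mk (Ideal.span {g}) with hππ
  have hπ : ∀ u v : (ZMod 2)[X], g ∣ u - v → π u = π v := by
    intro u v h
    exact Ideal.Quotient.eq.mpr (Ideal.mem_span_singleton.mpr h)
  have hπ' : ∀ u v : (ZMod 2)[X], π u = π v → g ∣ u - v := by
    intro u v h
    exact Ideal.mem_span_singleton.mp (Ideal.Quotient.eq.mp h)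
  have hq2 : a.comp (X ^ (N - 1)) * (a.comp (X ^ (N - 1))).comp (X ^ (N - 1)) - 1
      = q.comp (X ^ (N - 1)) * (f.comp (X ^ (N - 1))) ^ m := by
    have := congrArg (fun p : (ZMod 2)[X] => p.comp (X ^ (N - 1))) hq
    simpa [sub_comp, mul_comp, one_comp, pow_comp] using this
  have e1 : π a * π (a.comp (X ^ (N - 1))) - 1 = π q * (π f) ^ m := by
    have := congrArg π hq
    simpa [map_sub, map_mul, map_one, map_pow] using this
  have e2 : π (a.comp (X ^ (N - 1))) * π ((a.comp (X ^ (N - 1))).comp (X ^ (N - 1))) - 1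
      = π (q.comp (X ^ (N - 1))) * (π (f.comp (X ^ (N - 1)))) ^ m := by
    have := congrArg π hq2
    simpa [map_sub, map_mul, map_one, map_pow] using this
  have e3 : π ((a.comp (X ^ (N - 1))).comp (X ^ (N - 1))) = π a := hπ _ _ (hinvol a)
  have e4 : π (X ^ d) * π (f.comp (X ^ (N - 1))) = π f := by
    have := hπ _ _ hrev
    simpa [map_mul] using this
  have e5 : π (X ^ (m * d)) * π q * (π f) ^ m = π (q.comp (X ^ (N - 1))) * (π f) ^ m := by
    have hXmd : π (X ^ (m * d)) = (π (X ^ d)) ^ m := by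
      rw [show m * d = d * m from Nat.mul_comm m d, pow_mul, map_pow]
    calc π (X ^ (m * d)) * π q * (π f) ^ m
        = (π (X ^ d)) ^ m * (π q * (π f) ^ m) := by rw [hXmd]; ring
      _ = (π (X ^ d)) ^ m * (π a * π (a.comp (X ^ (N - 1))) - 1) := by rw [e1]
      _ = (π (X ^ d)) ^ m
          * (π (a.comp (X ^ (N - 1))) * π ((a.comp (X ^ (N - 1))).comp (X ^ (N - 1))) - 1) := by
            rw [e3]; ring
      _ = (π (X ^ d)) ^ m * (π (q.comp (X ^ (N - 1))) * (π (f.comp (X ^ (N - 1)))) ^ m) := by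
            rw [e2]
      _ = π (q.comp (X ^ (N - 1))) * (π (X ^ d) * π (f.comp (X ^ (N - 1)))) ^ m := by ring
      _ = π (q.comp (X ^ (N - 1))) * (π f) ^ m := by rw [e4]
  have e6 : g ∣ (X ^ (m * d) * q - q.comp (X ^ (N - 1))) * f ^ m := by
    have h := hπ' (X ^ (m * d) * q * f ^ m) (q.comp (X ^ (N - 1)) * f ^ m) (by
      rw [map_mul, map_mul, map_mul, map_pow, map_pow]
      exact e5)
    have hfact : X ^ (m * d) * q * f ^ m - q.comp (X ^ (N - 1)) * f ^ m
        = (X ^ (m * d) * q - q.comp (X ^ (N - 1))) * f ^ m := by ring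
    rw [← hfact]
    exact h
  have e7 : f ∣ X ^ (m * d) * q - q.comp (X ^ (N - 1)) := by
    have h1 : f ^ (m + 1) ∣ (X ^ (m * d) * q - q.comp (X ^ (N - 1))) * f ^ m := by
      rw [← hsm]
      exact hfsg.trans e6
    rw [pow_succ, mul_comm (X ^ (m * d) * q - q.comp (X ^ (N - 1))) (f ^ m)] at h1
    exact (mul_dvd_mul_iff_left (pow_ne_zero m hf0)).mp h1
  -- Part 1
  have part1 : f ∣ b.comp (X ^ (N - 1)) - X ^ (m * d) * b := by
    have h1 : f ∣ (q - b).comp (X ^ (N - 1)) := by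
      obtain ⟨c, hc⟩ := hb
      rw [hc, mul_comp]
      exact hfσf.mul_right _
    have h2 : f ∣ X ^ (m * d) * (q - b) := hb.mul_left _
    have h3 : f ∣ q.comp (X ^ (N - 1)) - X ^ (m * d) * q := by
      have := e7.neg_right
      simpa using this
    have hfact : b.comp (X ^ (N - 1)) - X ^ (m * d) * b
        = -((q - b).comp (X ^ (N - 1)))
          + (q.comp (X ^ (N - 1)) - X ^ (m * d) * q) + X ^ (m * d) * (q - b) := by
      rw [sub_comp]; ring
    rw [hfact]
    exact dvd_add (dvd_add h1.neg_right h3) h2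
  refine ⟨part1, ?_⟩
  -- Part 2
  haveI : Fact (Irreducible f) := ⟨hirr⟩
  haveI : CharP (AdjoinRoot f) 2 :=
    charP_of_injective_ringHom (algebraMap (ZMod 2) (AdjoinRoot f)).injective 2
  set ζ := AdjoinRoot.root f with hζζ
  have hζf : aeval ζ f = 0 := by rw [hζζ, AdjoinRoot.aeval_eq, AdjoinRoot.mk_self]
  have hζN : ζ ^ N = 1 := by
    obtain ⟨c, hc⟩ := hfg
    have h0 : aeval ζ g = 0 := by rw [hc, map_mul, hζf, zero_mul]
    rw [hgg] at h0
    simp only [map_sub, map_pow, aeval_X, map_one] at h0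
    linear_combination h0
  set η := ζ ^ (N - 1) with hηη
  have hinv : η * ζ = 1 := by
    rw [hηη, ← pow_succ]
    have : N - 1 + 1 = N := by omega
    rw [this, hζN]
  have hroot : aeval η f = 0 := by
    obtain ⟨c, hc⟩ := hfσf
    have h0 : aeval ζ (f.comp (X ^ (N - 1))) = 0 := by rw [hc, map_mul, hζf, zero_mul]
    rw [aeval_comp] at h0
    simpa [map_pow, aeval_X, ← hηη] using h0
  have hconj : ζ ^ (2 ^ (d / 2)) = η := aux_conj f hirr hd hdeven η hinv hroot
  -- value of b at η
  have hbval : aeval η b = ζ ^ (m * d) * aeval ζ b := by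
    obtain ⟨c, hc⟩ := part1
    have h0 : aeval ζ (b.comp (X ^ (N - 1)) - X ^ (m * d) * b) = 0 := by
      rw [hc, map_mul, hζf, zero_mul]
    simp only [map_sub, map_mul, map_pow, aeval_X, aeval_comp] at h0
    rw [← hηη] at h0
    linear_combination h0
  -- final computation
  have hfinal : (AdjoinRoot.mk f (X ^ (m * (d / 2)) * b)) ^ (2 ^ (d / 2))
      = AdjoinRoot.mk f (X ^ (m * (d / 2)) * b) := by
    have hmk : AdjoinRoot.mk f (X ^ (m * (d / 2)) * b) = ζ ^ (m * (d / 2)) * aeval ζ b := by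
      rw [map_mul, map_pow, AdjoinRoot.mk_X, ← hζζ, AdjoinRoot.aeval_eq]
    have hexp : ∀ E : ℕ, m * d = E + E →
        (N - 1) * E + m * d = N * E + E := by
      intro E hmd
      obtain ⟨k, rfl⟩ : ∃ k, N = k + 1 := ⟨N - 1, by omega⟩
      simp only [Nat.add_sub_cancel]
      rw [hmd]; ring
    have hmd : m * d = m * (d / 2) + m * (d / 2) := by
      rw [hddiv, hd2']; ring
    rw [hmk, mul_pow, ← pow_mul, Nat.mul_comm (m * (d / 2)), pow_mul, hconj,
      aux_aeval_pow, hconj, hbval, hηη, ← pow_mul, ← mul_assoc, ← pow_add,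
      hexp (m * (d / 2)) hmd, pow_add, pow_mul, hζN, one_pow, one_mul]
  exact hfinal
end

section
/- Let n be odd, λ ≥ 1, N = 2^λ n, x^n - 1 = ∏_{i=0}^{r} f_i(x) over F_2, and ε_i ∈ A = F_2[x]/⟨x^N - 1⟩ the idempotent with ε_i ≡ δ_{ij} (mod f_j(x)^{2^λ}). Then ε_i(x^{-1}) = ε_{μ(i)}(x) in A, where x^{-1} = x^{N-1} and μ(i) is the index with f_{μ(i)} = f_i*, the reciprocal polynomial of f_i. -/
open Polynomial

set_option synthInstance.maxHeartbeats 1000000 in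
/-- With `x^n - 1 = ∏ f_i` (`n` odd), `N = 2^λ n`, and `ε_i` the primitive idempotent of
`A = F_2[x]/⟨x^N - 1⟩` corresponding to `f_i^(2^λ)` (represented by `e_i`), one has
`ε_i(x⁻¹) = ε_(μ(i))(x)` in `A`, where `x⁻¹ = x^(N-1)` and `μ` is the permutation of
indices with `f_(μ(i)) = f_i*`, the reciprocal polynomial of `f_i`. -/
theorem stmt_16 (n : ℕ) (hn : Odd n) (hn0 : 0 < n) (l N : ℕ) (hl : 1 ≤ l)
    (hN : N = 2 ^ l * n) (r : ℕ)
    (f : Fin (r + 1) → Polynomial (ZMod 2)) (hirr : ∀ i, Irreducible (f i))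
    (hcop : Pairwise fun i j => IsCoprime (f i) (f j))
    (hfact : X ^ n - 1 = ∏ i, f i)
    (ε : Fin (r + 1) → Polynomial (ZMod 2) ⧸ Ideal.span {(X : Polynomial (ZMod 2)) ^ N - 1})
    (e : Fin (r + 1) → Polynomial (ZMod 2))
    (he : ∀ i, ε i = Ideal.Quotient.mk (Ideal.span {(X : Polynomial (ZMod 2)) ^ N - 1}) (e i))
    (hcong : ∀ i j, (f j) ^ (2 ^ l) ∣ (e i - if i = j then 1 else 0))
    (μ : Fin (r + 1) → Fin (r + 1)) (hμ : ∀ i, f (μ i) = (f i).reverse) :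
    ∀ i, Ideal.Quotient.mk (Ideal.span {(X : Polynomial (ZMod 2)) ^ N - 1})
            ((e i).comp (X ^ (N - 1)))
      = ε (μ i) := by
  intro i
  set I : Ideal (Polynomial (ZMod 2)) := Ideal.span {(X : Polynomial (ZMod 2)) ^ N - 1} with hIdef
  have hN0 : 0 < N := by
    rw [hN]; positivity
  -- the factorization of X^N - 1
  have hprod : (X : Polynomial (ZMod 2)) ^ N - 1 = ∏ k, f k ^ (2 ^ l) := by
    have h2 : ((X : Polynomial (ZMod 2)) ^ n - 1) ^ (2 ^ l) = X ^ N - 1 := by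
      rw [sub_pow_char_pow, one_pow, ← pow_mul, mul_comm n, hN]
    rw [← h2, hfact, ← Finset.prod_pow]
  -- every f k has nonzero constant coefficient
  have hc0 : ∀ k, (f k).coeff 0 ≠ 0 := by
    intro k hk
    have hXd : (X : Polynomial (ZMod 2)) ∣ X ^ n - 1 := by
      rw [hfact]
      exact dvd_trans (X_dvd_iff.mpr hk) (Finset.dvd_prod_of_mem f (Finset.mem_univ k))
    have := X_dvd_iff.mp hXd
    rw [coeff_sub, coeff_X_pow, if_neg (by omega : ¬ (0 = n)), coeff_one, if_pos rfl] at this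
    exact absurd this (by decide)
  -- reverse is involutive on the f k
  have hrevrev : ∀ k, (f k).reverse.reverse = f k := by
    intro k
    have h0 : (f k).natTrailingDegree = 0 :=
      natTrailingDegree_eq_zero.mpr (Or.inr (hc0 k))
    ext m
    rw [coeff_reverse, reverse_natDegree, h0, Nat.sub_zero, coeff_reverse, revAt_invol]
  -- f is injective
  have hfinj : Function.Injective f := by
    intro a b hab
    by_contra hne
    exact (hirr a).not_isUnit (isCoprime_self.mp (by simpa [hab] using hcop hne))
  -- μ is injective, hence surjective
  have hμinj : Function.Injective μ := by
    intro a b h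
    apply hfinj
    rw [← hrevrev a, ← hrevrev b, ← hμ a, ← hμ b, h]
  have hμsurj : Function.Surjective μ := Finite.injective_iff_surjective.mp hμinj
  -- work in the quotient ring
  set φ : Polynomial (ZMod 2) →+* Polynomial (ZMod 2) ⧸ I := Ideal.Quotient.mk I with hφdef
  have hXNmem : (X : Polynomial (ZMod 2)) ^ N - 1 ∈ I := Ideal.subset_span rfl
  set u : Polynomial (ZMod 2) ⧸ I := φ X with hudef
  have hu : u ^ N = 1 := by
    have : φ ((X : Polynomial (ZMod 2)) ^ N - 1) = 0 := (Ideal.Quotient.eq_zero_iff_mem).mpr hXNmem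
    rw [map_sub, map_pow, map_one, sub_eq_zero] at this
    exact this
  have humul : u * u ^ (N - 1) = 1 := by
    rw [← pow_succ', Nat.sub_add_cancel hN0, hu]
  letI : Invertible u := ⟨u ^ (N - 1), by rw [mul_comm] at humul; exact humul, humul⟩
  have hinv : (⅟ u : Polynomial (ZMod 2) ⧸ I) = u ^ (N - 1) := rfl
  -- φ as an eval₂
  have hφeval : ∀ p : Polynomial (ZMod 2), φ p = eval₂ (φ.comp C) u p := by
    intro p
    conv_lhs => rw [← eval₂_C_X (p := p)]
    rw [hom_eval₂]
  -- composition with X^(N-1) as eval₂ at ⅟ u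
  have hcompeval : ∀ p : Polynomial (ZMod 2),
      φ (p.comp (X ^ (N - 1))) = eval₂ (φ.comp C) (⅟ u) p := by
    intro p
    rw [comp, hom_eval₂, hinv, map_pow]
  -- the key substitution identity for the factors
  have hfsub : ∀ j, eval₂ (φ.comp C) (⅟ u) (f j)
      = φ (f (μ j)) * (⅟ u) ^ (f (μ j)).natDegree := by
    intro j
    have key := eval₂_reverse_mul_pow (φ.comp C) u (f (μ j))
    have hrev : (f (μ j)).reverse = f j := by rw [hμ j, hrevrev]
    rw [hrev, ← hφeval] at key
    calc eval₂ (φ.comp C) (⅟ u) (f j)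
        = eval₂ (φ.comp C) (⅟ u) (f j) * (u ^ (f (μ j)).natDegree * (⅟ u) ^ (f (μ j)).natDegree)
          := by rw [← mul_pow, mul_invOf_self, one_pow, mul_one]
      _ = (eval₂ (φ.comp C) (⅟ u) (f j) * u ^ (f (μ j)).natDegree) * (⅟ u) ^ (f (μ j)).natDegree
          := by ring
      _ = φ (f (μ j)) * (⅟ u) ^ (f (μ j)).natDegree := by rw [key]
  -- the divisibility for each factor, in the quotient
  have hdvdA : ∀ j, φ (f (μ j)) ^ (2 ^ l)
      ∣ φ ((e i).comp (X ^ (N - 1))) - φ (e (μ i)) := by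
    intro j
    -- first congruence: for e i composed with X^(N-1)
    obtain ⟨g, hg⟩ := hcong i j
    have h1 : φ ((e i).comp (X ^ (N - 1))) - (if i = j then 1 else 0)
        = φ (f (μ j)) ^ (2 ^ l) * ((⅟ u) ^ ((f (μ j)).natDegree * 2 ^ l)
            * eval₂ (φ.comp C) (⅟ u) g) := by
      have := congrArg (eval₂ (φ.comp C) (⅟ u)) hg
      rw [eval₂_sub, eval₂_mul, eval₂_pow, hfsub j] at this
      rw [hcompeval]
      have hif : eval₂ (φ.comp C) (⅟ u) (if i = j then (1 : Polynomial (ZMod 2)) else 0)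
          = (if i = j then 1 else 0) := by
        split <;> simp
      rw [← hif]
      rw [this, mul_pow, ← pow_mul]
      ring
    -- second congruence: for e (μ i)
    obtain ⟨g', hg'⟩ := hcong (μ i) (μ j)
    have h2 : φ (e (μ i)) - (if i = j then 1 else 0)
        = φ (f (μ j)) ^ (2 ^ l) * φ g' := by
      have hifeq : (if μ i = μ j then (1 : Polynomial (ZMod 2)) else 0)
          = (if i = j then 1 else 0) := by simp only [hμinj.eq_iff]
      rw [hifeq] at hg'
      have := congrArg φ hg'
      rw [map_sub, map_mul, map_pow, apply_ite φ, map_one, map_zero] at this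
      exact this
    have : φ ((e i).comp (X ^ (N - 1))) - φ (e (μ i))
        = (φ ((e i).comp (X ^ (N - 1))) - (if i = j then 1 else 0))
          - (φ (e (μ i)) - (if i = j then 1 else 0)) := by ring
    rw [this, h1, h2]
    exact dvd_sub (Dvd.intro _ rfl) (Dvd.intro _ rfl)
  -- lift the divisibility to the polynomial ring
  have hdvdP : ∀ k, f k ^ (2 ^ l) ∣ (e i).comp (X ^ (N - 1)) - e (μ i) := by
    intro k
    obtain ⟨j, rfl⟩ := hμsurj k
    obtain ⟨a, ha⟩ := hdvdA j
    obtain ⟨b, rfl⟩ := Ideal.Quotient.mk_surjective a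
    have : φ ((e i).comp (X ^ (N - 1)) - e (μ i) - f (μ j) ^ (2 ^ l) * b) = 0 := by
      rw [map_sub, map_sub, map_mul, map_pow, ← ha]; ring
    have hmem := Ideal.Quotient.eq_zero_iff_mem.mp this
    rw [hIdef, Ideal.mem_span_singleton] at hmem
    obtain ⟨c, hc⟩ := hmem
    have hfk : f (μ j) ^ (2 ^ l) ∣ (X : Polynomial (ZMod 2)) ^ N - 1 := by
      rw [hprod]
      exact Finset.dvd_prod_of_mem _ (Finset.mem_univ (μ j))
    have : (e i).comp (X ^ (N - 1)) - e (μ i)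
        = ((X : Polynomial (ZMod 2)) ^ N - 1) * c + f (μ j) ^ (2 ^ l) * b := by
      rw [← hc]; ring
    rw [this]
    exact dvd_add (hfk.trans (Dvd.intro _ rfl)) (Dvd.intro _ rfl)
  -- conclude: X^N - 1 divides the difference
  have hXNdvd : (X : Polynomial (ZMod 2)) ^ N - 1 ∣ (e i).comp (X ^ (N - 1)) - e (μ i) := by
    rw [hprod]
    exact Fintype.prod_dvd_of_coprime
      (fun a b hab => (hcop (fun h : a = b => hab h)).pow) hdvdP
  rw [he]
  exact Ideal.Quotient.eq.mpr (by rw [hIdef, Ideal.mem_span_singleton]; exact hXNdvd)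
end

section
/- Let A be a commutative ring and let a_0(x), a_1(x), b_0(x), b_1(x) be elements of R = F_2[x]/⟨x^N - 1⟩ with coefficient vectors a = (a_{0,0},...,a_{N-1,0}, a_{0,1},...,a_{N-1,1}) and b = (b_{0,0},...,b_{N-1,0}, b_{0,1},...,b_{N-1,1}) in F_2^{2N}. If a_0(x) b_0(x^{-1}) + a_1(x) b_1(x^{-1}) = 0 in R, where x^{-1} = x^{N-1}, then the Euclidean inner product [a,b] = ∑_{k=0}^{N-1} ∑_{j=0}^{1} a_{k,j} b_{k,j} is 0 in F_2. -/
open Polynomial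

lemma aux_eval17 (N : ℕ) (u : Fin N → ZMod 2) :
    (aeval (AddMonoidAlgebra.single (1 : ZMod N) (1 : ZMod 2)))
      (∑ k : Fin N, C (u k) * X ^ (k : ℕ)) =
    ∑ k : Fin N, AddMonoidAlgebra.single ((k : ℕ) : ZMod N) (u k) := by
  simp [map_sum, AddMonoidAlgebra.single_pow, AddMonoidAlgebra.single_mul_single]

lemma aux_cast17 (N : ℕ) (k l : Fin N) :
    (((k : ℕ) : ZMod N) = ((l : ℕ) : ZMod N)) ↔ k = l := by
  rw [ZMod.natCast_eq_natCast_iff, Nat.ModEq,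
    Nat.mod_eq_of_lt k.isLt, Nat.mod_eq_of_lt l.isLt, Fin.val_eq_val]

lemma aux_cond17 (N : ℕ) (hN : 0 < N) (k l : Fin N) :
    (((k : ℕ) : ZMod N) + (((l : ℕ) * (N - 1) : ℕ) : ZMod N) = 0) ↔ k = l := by
  have h1 : (((l : ℕ) * (N - 1) : ℕ) : ZMod N) = -((l : ℕ) : ZMod N) := by
    push_cast [Nat.cast_sub hN]
    simp [ZMod.natCast_self]
  rw [h1, add_neg_eq_zero, aux_cast17]

/-- Let `a = (a₀, a₁)` and `b = (b₀, b₁)` be vectors in `F_2^(2N)` with associated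
polynomials `a_j(x) = ∑ a_{k,j} x^k`, `b_j(x) = ∑ b_{k,j} x^k` in `R = F_2[x]/⟨x^N - 1⟩`.
If `a₀(x)b₀(x⁻¹) + a₁(x)b₁(x⁻¹) = 0` in `R` (with `x⁻¹ = x^(N-1)`), then the Euclidean
inner product `[a, b] = ∑_k ∑_j a_{k,j} b_{k,j}` vanishes. -/
theorem stmt_17 (N : ℕ) (hN : 0 < N)
    (a0 a1 b0 b1 : Fin N → ZMod 2)
    (h : Ideal.Quotient.mk (Ideal.span {(X : Polynomial (ZMod 2)) ^ N - 1})
          ((∑ k : Fin N, C (a0 k) * X ^ (k : ℕ)) *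
              (∑ k : Fin N, C (b0 k) * X ^ (k : ℕ)).comp (X ^ (N - 1)) +
            (∑ k : Fin N, C (a1 k) * X ^ (k : ℕ)) *
              (∑ k : Fin N, C (b1 k) * X ^ (k : ℕ)).comp (X ^ (N - 1))) = 0) :
    (∑ k : Fin N, (a0 k * b0 k + a1 k * b1 k)) = 0 := by
  set y : AddMonoidAlgebra (ZMod 2) (ZMod N) := AddMonoidAlgebra.single 1 1 with hy
  have hyN : y ^ N = 1 := by
    rw [hy, AddMonoidAlgebra.single_pow, one_pow]
    simp [AddMonoidAlgebra.one_def]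
  have hmem := (Ideal.Quotient.eq_zero_iff_mem).mp h
  obtain ⟨q, hq⟩ := Ideal.mem_span_singleton'.mp hmem
  have hφ : aeval y ((∑ k : Fin N, C (a0 k) * X ^ (k : ℕ)) *
              (∑ k : Fin N, C (b0 k) * X ^ (k : ℕ)).comp (X ^ (N - 1)) +
            (∑ k : Fin N, C (a1 k) * X ^ (k : ℕ)) *
              (∑ k : Fin N, C (b1 k) * X ^ (k : ℕ)).comp (X ^ (N - 1))) = 0 := by
    rw [← hq]
    simp [map_mul, map_sub, map_pow, hyN]
  have hyN1 : y ^ (N - 1) = AddMonoidAlgebra.single (((N - 1 : ℕ) : ZMod N)) 1 := by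
    rw [hy, AddMonoidAlgebra.single_pow, one_pow]
    norm_num
  have hcomp : ∀ v : Fin N → ZMod 2,
      aeval y ((∑ k : Fin N, C (v k) * X ^ (k : ℕ)).comp (X ^ (N - 1))) =
      ∑ k : Fin N, AddMonoidAlgebra.single (((k : ℕ) * (N - 1) : ℕ) : ZMod N) (v k) := by
    intro v
    rw [aeval_comp, map_pow, aeval_X, hyN1]
    simp [map_sum, AddMonoidAlgebra.single_pow, AddMonoidAlgebra.single_mul_single]
  rw [map_add, map_mul, map_mul, aux_eval17, aux_eval17, hcomp, hcomp] at hφ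
  have hcoeff : ∀ u v : Fin N → ZMod 2,
      ((∑ k : Fin N, AddMonoidAlgebra.single ((k : ℕ) : ZMod N) (u k)) *
        (∑ k : Fin N, AddMonoidAlgebra.single (((k : ℕ) * (N - 1) : ℕ) : ZMod N) (v k))).coeff 0
      = ∑ k : Fin N, u k * v k := by
    intro u v
    rw [Finset.sum_mul_sum]
    simp only [AddMonoidAlgebra.single_mul_single]
    rw [AddMonoidAlgebra.coeff_sum, Finsupp.finset_sum_apply]
    refine Finset.sum_congr rfl fun i _ => ?_
    rw [AddMonoidAlgebra.coeff_sum, Finsupp.finset_sum_apply]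
    simp only [AddMonoidAlgebra.coeff_single, Finsupp.single_apply, aux_cond17 N hN]
    simp
  have hz := congrArg (fun p : AddMonoidAlgebra (ZMod 2) (ZMod N) => p.coeff 0) hφ
  simp only [AddMonoidAlgebra.coeff_add, Finsupp.add_apply, AddMonoidAlgebra.coeff_zero, Finsupp.coe_zero, Pi.zero_apply] at hz
  rw [hcoeff, hcoeff] at hz
  rw [Finset.sum_add_distrib]
  simpa using hz
end

section
/- Let f be a self-reciprocal irreducible polynomial over F_2 of even degree d dividing x^n - 1 (n odd), λ ≥ 2, and A = F_2[x]/⟨f(x)^{2^λ}⟩. For 1 ≤ k ≤ 2^λ - 1, the A-submodule C of A^2 generated by (f(x)^{k+1} b(x), f(x)^k), for any b(x) ∈ A, never satisfies the closure condition: (f(x^{-1})^k, f(x^{-1})^{k+1} b(x^{-1})) ∉ C, where x^{-1} = x^{N-1} with N = 2^λ n. -/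
open Polynomial

/-- Let `f` be a self-reciprocal irreducible polynomial over `F_2` of even degree `d`
dividing `x^n - 1` (`n` odd), `λ ≥ 2`, `N = 2^λ n`, and `A = F_2[x]/⟨f^(2^λ)⟩`.  For
`1 ≤ k ≤ 2^λ - 1` and any `b`, the cyclic `A`-submodule of `A²` generated by
`(f^(k+1) b, f^k)` never contains `(f(x⁻¹)^k, f(x⁻¹)^(k+1) b(x⁻¹))`, where
`x⁻¹ = x^(N-1)`. -/
theorem stmt_18 (n : ℕ) (hn : Odd n) (hn0 : 0 < n) (f : Polynomial (ZMod 2))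
    (hirr : Irreducible f) (hd : 2 ≤ f.natDegree) (hdeven : Even f.natDegree)
    (hself : f.reverse = f) (hdvd : f ∣ X ^ n - 1)
    (l N k : ℕ) (hl : 2 ≤ l) (hN : N = 2 ^ l * n) (hk1 : 1 ≤ k) (hk : k ≤ 2 ^ l - 1)
    (b : Polynomial (ZMod 2)) :
    ¬ ∃ u : Polynomial (ZMod 2) ⧸ Ideal.span {f ^ 2 ^ l},
        u * Ideal.Quotient.mk (Ideal.span {f ^ 2 ^ l}) (f ^ (k + 1) * b)
            = (Polynomial.aeval ((Ideal.Quotient.mk (Ideal.span {f ^ 2 ^ l}) X) ^ (N - 1)) f) ^ k ∧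
        u * Ideal.Quotient.mk (Ideal.span {f ^ 2 ^ l}) (f ^ k)
            = (Polynomial.aeval ((Ideal.Quotient.mk (Ideal.span {f ^ 2 ^ l}) X) ^ (N - 1)) f) ^ (k + 1) *
              Polynomial.aeval ((Ideal.Quotient.mk (Ideal.span {f ^ 2 ^ l}) X) ^ (N - 1)) b := by
  rintro ⟨u, h1, -⟩
  have hf0 : f ≠ 0 := hirr.ne_zero
  have hN1 : 1 ≤ N := by
    rw [hN]; exact Nat.one_le_iff_ne_zero.mpr (by positivity)
  have mk := Ideal.Quotient.mk (Ideal.span {f ^ 2 ^ l})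
  -- X^N = 1 in the quotient
  have hdvdN : f ^ 2 ^ l ∣ X ^ N - 1 := by
    have : (X : Polynomial (ZMod 2)) ^ N - 1 = (X ^ n - 1) ^ 2 ^ l := by
      rw [sub_pow_char_pow _ .., ← pow_mul, one_pow, hN, Nat.mul_comm]
    rw [this]
    exact pow_dvd_pow_of_dvd hdvd _
  have hXN : (Ideal.Quotient.mk (Ideal.span {f ^ 2 ^ l}) X) ^ N = 1 := by
    have h0 : Ideal.Quotient.mk (Ideal.span {f ^ 2 ^ l}) (X ^ N - 1) = 0 := by
      rw [Ideal.Quotient.eq_zero_iff_mem, Ideal.mem_span_singleton]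
      exact hdvdN
    have := sub_eq_zero.mp (by simpa using h0)
    simpa using this
  set ξ := Ideal.Quotient.mk (Ideal.span {f ^ 2 ^ l}) X with hξ
  have hxinv : ξ * ξ ^ (N - 1) = 1 := by
    rw [← pow_succ', Nat.sub_add_cancel hN1, hXN]
  letI : Invertible ξ := ⟨ξ ^ (N - 1), by rw [mul_comm] at hxinv; exact hxinv, hxinv⟩
  have hmkf : aeval ξ f = Ideal.Quotient.mk (Ideal.span {f ^ 2 ^ l}) f := by
    have := aeval_algHom_apply (Ideal.Quotient.mkₐ (ZMod 2) (Ideal.span {f ^ 2 ^ l})) X f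
    simpa [hξ] using this
  have key : aeval (ξ ^ (N - 1)) f * ξ ^ f.natDegree
      = Ideal.Quotient.mk (Ideal.span {f ^ 2 ^ l}) f := by
    have h := eval₂_reverse_mul_pow
      (algebraMap (ZMod 2) (Polynomial (ZMod 2) ⧸ Ideal.span {f ^ 2 ^ l})) ξ f
    rw [hself] at h
    have hinv : (⅟ ξ : Polynomial (ZMod 2) ⧸ Ideal.span {f ^ 2 ^ l}) = ξ ^ (N - 1) := rfl
    rw [hinv, ← aeval_def, ← aeval_def, hmkf] at h
    exact h
  have h2 : (Ideal.Quotient.mk (Ideal.span {f ^ 2 ^ l}) f) ^ k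
      = (Ideal.Quotient.mk (Ideal.span {f ^ 2 ^ l}) f) ^ (k + 1)
        * (u * Ideal.Quotient.mk (Ideal.span {f ^ 2 ^ l}) b * (ξ ^ f.natDegree) ^ k) := by
    calc (Ideal.Quotient.mk (Ideal.span {f ^ 2 ^ l}) f) ^ k
        = (aeval (ξ ^ (N - 1)) f * ξ ^ f.natDegree) ^ k := by rw [key]
      _ = (aeval (ξ ^ (N - 1)) f) ^ k * (ξ ^ f.natDegree) ^ k := mul_pow ..
      _ = u * Ideal.Quotient.mk (Ideal.span {f ^ 2 ^ l}) (f ^ (k + 1) * b)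
            * (ξ ^ f.natDegree) ^ k := by rw [h1]
      _ = _ := by rw [map_mul, map_pow]; ring
  obtain ⟨C, hC⟩ := Ideal.Quotient.mk_surjective
    (u * Ideal.Quotient.mk (Ideal.span {f ^ 2 ^ l}) b * (ξ ^ f.natDegree) ^ k)
  have hmem : f ^ 2 ^ l ∣ f ^ k - f ^ (k + 1) * C := by
    rw [← Ideal.mem_span_singleton, ← Ideal.Quotient.eq_zero_iff_mem]
    rw [map_sub, map_mul, map_pow, map_pow, hC, ← h2, sub_self]
  have hkle : k ≤ 2 ^ l := le_trans hk (Nat.sub_le _ _)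
  have hfac : f ^ k - f ^ (k + 1) * C = f ^ k * (1 - f * C) := by rw [pow_succ]; ring
  rw [hfac, ← Nat.sub_add_cancel hkle, pow_add, mul_comm (f ^ (2 ^ l - k))] at hmem
  have hcancel : f ^ (2 ^ l - k) ∣ 1 - f * C :=
    (mul_dvd_mul_iff_left (pow_ne_zero k hf0)).mp hmem
  have hf1 : f ∣ 1 - f * C := dvd_trans (dvd_pow_self f (by omega)) hcancel
  have hone : f ∣ 1 := by
    have := dvd_add hf1 ⟨C, rfl⟩
    simpa using this
  exact hirr.not_isUnit (isUnit_of_dvd_one hone)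
end
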